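/- arXiv:1807.03712 — 5 statements merged into one kernel-verified Lean document; each statement's English description precedes it below -/
import Mathlib

section
/- The Kullback–Leibler divergence decomposes as D_KL(ν ‖ ν_r) = D_KL(ν ‖ ν_r*) + D_KL(ν_r* ‖ ν_r). In particular, D_KL(ν ‖ ν_r) ≥ D_KL(ν ‖ ν_r*) for every Borel function g : ℝ^d → ℝ₊, so any g* with g* ∘ P_r = E_μ(f | σ(P_r)) minimizes g ↦ D_KL(ν ‖ ν_r) over Borel profile functions g. -/
open MeasureTheory Matrix

-- Kullback–Leibler divergence: `∫ log (dν₁/dν₂) dν₁` when `ν₁ ≪ ν₂` (and the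
-- logarithm of the density is `ν₁`-integrable), and `+∞` otherwise.
open scoped Classical in
noncomputable def klDiv {α : Type*} [MeasurableSpace α] (ν₁ ν₂ : Measure α) : EReal :=
  if ν₁ ≪ ν₂ ∧ Integrable (fun x => Real.log (ν₁.rnDeriv ν₂ x).toReal) ν₁ then
    ((∫ x, Real.log (ν₁.rnDeriv ν₂ x).toReal ∂ν₁ : ℝ) : EReal)
  else ⊤

/-- The probability measure with density proportional to `f` with respect to `μ`. -/
noncomputable def normWithDensity {α : Type*} [MeasurableSpace α] (μ : Measure α)
    (f : α → ℝ) : Measure α :=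
  (ENNReal.ofReal (∫ x, f x ∂μ))⁻¹ • μ.withDensity (fun x => ENNReal.ofReal (f x))

open scoped ENNReal NNReal

section Aux

variable {α : Type*} [m0 : MeasurableSpace α]

lemma klDiv_ne_bot (ν₁ ν₂ : Measure α) : klDiv ν₁ ν₂ ≠ ⊥ := by
  unfold klDiv; split_ifs with h
  · exact EReal.coe_ne_bot _
  · simp

lemma isProbability_normWithDensity (μ : Measure α) {f : α → ℝ}
    (h0 : 0 ≤ᵐ[μ] f) (hpos : 0 < ∫ x, f x ∂μ) (hi : Integrable f μ) :
    IsProbabilityMeasure (normWithDensity μ f) := by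
  constructor
  rw [normWithDensity, Measure.smul_apply, smul_eq_mul,
    withDensity_apply _ MeasurableSet.univ, Measure.restrict_univ,
    ← ofReal_integral_eq_lintegral_ofReal hi h0,
    ENNReal.inv_mul_cancel (ENNReal.ofReal_pos.mpr hpos).ne' ENNReal.ofReal_ne_top]

lemma normWithDensity_eq_withDensity (μ : Measure α) {f₁ f₂ : α → ℝ}
    (h₁m : Measurable f₁) (h₂m : Measurable f₂) (h₂0 : 0 ≤ᵐ[μ] f₂)
    (h₁pos : 0 < ∫ x, f₁ x ∂μ) (h₂pos : 0 < ∫ x, f₂ x ∂μ)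
    (hae : ∀ᵐ x ∂μ, f₂ x = 0 → f₁ x = 0) :
    normWithDensity μ f₁ = (normWithDensity μ f₂).withDensity
      (fun x => (ENNReal.ofReal (∫ x, f₂ x ∂μ) * (ENNReal.ofReal (∫ x, f₁ x ∂μ))⁻¹) *
        (ENNReal.ofReal (f₁ x) * (ENNReal.ofReal (f₂ x))⁻¹)) := by
  set Z := ENNReal.ofReal (∫ x, f₁ x ∂μ) with hZdef
  set W := ENNReal.ofReal (∫ x, f₂ x ∂μ) with hWdef
  have hZ0 : Z ≠ 0 := (ENNReal.ofReal_pos.mpr h₁pos).ne'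
  have hZt : Z ≠ ⊤ := ENNReal.ofReal_ne_top
  have hW0 : W ≠ 0 := (ENNReal.ofReal_pos.mpr h₂pos).ne'
  have hWt : W ≠ ⊤ := ENNReal.ofReal_ne_top
  have hψm : Measurable (fun x => (W * Z⁻¹) *
      (ENNReal.ofReal (f₁ x) * (ENNReal.ofReal (f₂ x))⁻¹)) :=
    measurable_const.mul (h₁m.ennreal_ofReal.mul h₂m.ennreal_ofReal.inv)
  have key : (fun x => ENNReal.ofReal (f₂ x)) * (fun x => (W * Z⁻¹) *
      (ENNReal.ofReal (f₁ x) * (ENNReal.ofReal (f₂ x))⁻¹))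
      =ᵐ[μ] fun x => (W * Z⁻¹) * ENNReal.ofReal (f₁ x) := by
    filter_upwards [h₂0, hae] with x h2 h12
    simp only [Pi.mul_apply]
    rcases eq_or_lt_of_le h2 with h | h
    · rw [← h, h12 h.symm]; simp
    · have ha0 : ENNReal.ofReal (f₂ x) ≠ 0 := (ENNReal.ofReal_pos.mpr h).ne'
      have hat : ENNReal.ofReal (f₂ x) ≠ ⊤ := ENNReal.ofReal_ne_top
      calc ENNReal.ofReal (f₂ x) * ((W * Z⁻¹) *
            (ENNReal.ofReal (f₁ x) * (ENNReal.ofReal (f₂ x))⁻¹))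
          = (W * Z⁻¹) * ENNReal.ofReal (f₁ x) *
            (ENNReal.ofReal (f₂ x) * (ENNReal.ofReal (f₂ x))⁻¹) := by ring
        _ = (W * Z⁻¹) * ENNReal.ofReal (f₁ x) := by
            rw [ENNReal.mul_inv_cancel ha0 hat, mul_one]
  calc normWithDensity μ f₁ = Z⁻¹ • μ.withDensity (fun x => ENNReal.ofReal (f₁ x)) := rfl
    _ = (W⁻¹ * (W * Z⁻¹)) • μ.withDensity (fun x => ENNReal.ofReal (f₁ x)) := by
        rw [← mul_assoc, ENNReal.inv_mul_cancel hW0 hWt, one_mul]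
    _ = W⁻¹ • ((W * Z⁻¹) • μ.withDensity (fun x => ENNReal.ofReal (f₁ x))) := by
        rw [smul_smul]
    _ = W⁻¹ • μ.withDensity ((W * Z⁻¹) • (fun x => ENNReal.ofReal (f₁ x))) := by
        rw [withDensity_smul' _ _ (ENNReal.mul_ne_top hWt (ENNReal.inv_ne_top.mpr hZ0))]
    _ = W⁻¹ • μ.withDensity ((fun x => ENNReal.ofReal (f₂ x)) * (fun x => (W * Z⁻¹) *
          (ENNReal.ofReal (f₁ x) * (ENNReal.ofReal (f₂ x))⁻¹))) := by
        rw [withDensity_congr_ae key]; rfl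
    _ = W⁻¹ • ((μ.withDensity (fun x => ENNReal.ofReal (f₂ x))).withDensity
          (fun x => (W * Z⁻¹) * (ENNReal.ofReal (f₁ x) * (ENNReal.ofReal (f₂ x))⁻¹))) := by
        rw [withDensity_mul _ h₂m.ennreal_ofReal hψm]
    _ = (normWithDensity μ f₂).withDensity
          (fun x => (W * Z⁻¹) * (ENNReal.ofReal (f₁ x) * (ENNReal.ofReal (f₂ x))⁻¹)) := by
        rw [normWithDensity, withDensity_smul_measure]

lemma lintegral_inv_rnDeriv_le {μ ν : Measure α} [IsProbabilityMeasure μ]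
    [IsProbabilityMeasure ν] (hμν : μ ≪ ν) :
    ∫⁻ x, (μ.rnDeriv ν x)⁻¹ ∂μ ≤ 1 := by
  have h1 : ∫⁻ x, (μ.rnDeriv ν x)⁻¹ ∂(ν.withDensity (μ.rnDeriv ν)) ≤ 1 := by
    change ∫⁻ x, (μ.rnDeriv ν)⁻¹ x ∂(ν.withDensity (μ.rnDeriv ν)) ≤ 1
    rw [lintegral_withDensity_eq_lintegral_mul _ (Measure.measurable_rnDeriv μ ν)
      (Measure.measurable_rnDeriv μ ν).inv]
    calc ∫⁻ x, (μ.rnDeriv ν * (μ.rnDeriv ν)⁻¹) x ∂ν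
        ≤ ∫⁻ _, 1 ∂ν := by
          refine lintegral_mono fun x => ?_
          simp only [Pi.mul_apply, Pi.inv_apply]
          rcases eq_or_ne (μ.rnDeriv ν x) 0 with h | h
          · simp [h]
          · rcases eq_or_ne (μ.rnDeriv ν x) ⊤ with h' | h'
            · simp [h']
            · rw [ENNReal.mul_inv_cancel h h']
      _ = 1 := by simp
  calc ∫⁻ x, (μ.rnDeriv ν x)⁻¹ ∂μ
      = ∫⁻ x, (μ.rnDeriv ν x)⁻¹ ∂(ν.withDensity (μ.rnDeriv ν)) := by
        rw [Measure.withDensity_rnDeriv_eq μ ν hμν]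
    _ ≤ 1 := h1

lemma integrable_neg_part_llr {μ ν : Measure α} [IsProbabilityMeasure μ]
    [IsProbabilityMeasure ν] (hμν : μ ≪ ν) :
    Integrable (fun x => max (-Real.log (μ.rnDeriv ν x).toReal) 0) μ := by
  refine ⟨(((Measure.measurable_rnDeriv μ ν).ennreal_toReal.log).neg.max
    measurable_const).aestronglyMeasurable, ?_⟩
  have hb : ∀ᵐ x ∂μ, (‖max (-Real.log (μ.rnDeriv ν x).toReal) 0‖₊ : ℝ≥0∞)
      ≤ (μ.rnDeriv ν x)⁻¹ := by
    filter_upwards [Measure.rnDeriv_pos hμν, hμν.ae_le (Measure.rnDeriv_lt_top μ ν)]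
      with x h0 ht
    have ht0 : 0 < (μ.rnDeriv ν x).toReal := ENNReal.toReal_pos h0.ne' ht.ne
    have hmax : max (-Real.log (μ.rnDeriv ν x).toReal) 0 ≤ ((μ.rnDeriv ν x).toReal)⁻¹ := by
      refine max_le ?_ (inv_nonneg.mpr ht0.le)
      rw [← Real.log_inv]
      exact (Real.log_le_sub_one_of_pos (inv_pos.mpr ht0)).trans (by linarith)
    calc (‖max (-Real.log (μ.rnDeriv ν x).toReal) 0‖₊ : ℝ≥0∞)
        = ENNReal.ofReal (max (-Real.log (μ.rnDeriv ν x).toReal) 0) := by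
          rw [← enorm_eq_nnnorm, ← ofReal_norm, Real.norm_of_nonneg (le_max_right _ _)]
      _ ≤ ENNReal.ofReal ((μ.rnDeriv ν x).toReal)⁻¹ := ENNReal.ofReal_le_ofReal hmax
      _ = (ENNReal.ofReal (μ.rnDeriv ν x).toReal)⁻¹ := ENNReal.ofReal_inv_of_pos ht0
      _ = (μ.rnDeriv ν x)⁻¹ := by rw [ENNReal.ofReal_toReal ht.ne]
  exact (lintegral_mono_ae hb).trans_lt
    ((lintegral_inv_rnDeriv_le hμν).trans_lt ENNReal.one_lt_top)

lemma integral_log_rnDeriv_nonneg {μ ν : Measure α} [IsProbabilityMeasure μ]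
    [IsProbabilityMeasure ν] (hμν : μ ≪ ν)
    (hint : Integrable (fun x => Real.log (μ.rnDeriv ν x).toReal) μ) :
    0 ≤ ∫ x, Real.log (μ.rnDeriv ν x).toReal ∂μ := by
  have hinv_meas : Measurable fun x => ((μ.rnDeriv ν x).toReal)⁻¹ :=
    (Measure.measurable_rnDeriv μ ν).ennreal_toReal.inv
  have hae : ∀ᵐ x ∂μ, ENNReal.ofReal ((μ.rnDeriv ν x).toReal)⁻¹ = (μ.rnDeriv ν x)⁻¹ := by
    filter_upwards [Measure.rnDeriv_pos hμν, hμν.ae_le (Measure.rnDeriv_lt_top μ ν)]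
      with x h0 ht
    have ht0 : 0 < (μ.rnDeriv ν x).toReal := ENNReal.toReal_pos h0.ne' ht.ne
    rw [ENNReal.ofReal_inv_of_pos ht0, ENNReal.ofReal_toReal ht.ne]
  have hlin : ∫⁻ x, ENNReal.ofReal ((μ.rnDeriv ν x).toReal)⁻¹ ∂μ ≤ 1 := by
    rw [lintegral_congr_ae hae]; exact lintegral_inv_rnDeriv_le hμν
  have hinv_int : Integrable (fun x => ((μ.rnDeriv ν x).toReal)⁻¹) μ := by
    refine ⟨hinv_meas.aestronglyMeasurable, ?_⟩
    have : ∀ x, (‖((μ.rnDeriv ν x).toReal)⁻¹‖₊ : ℝ≥0∞)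
        = ENNReal.ofReal ((μ.rnDeriv ν x).toReal)⁻¹ := fun x => by
      rw [← enorm_eq_nnnorm, ← ofReal_norm,
        Real.norm_of_nonneg (inv_nonneg.mpr ENNReal.toReal_nonneg)]
    calc ∫⁻ x, (‖((μ.rnDeriv ν x).toReal)⁻¹‖₊ : ℝ≥0∞) ∂μ
        = ∫⁻ x, ENNReal.ofReal ((μ.rnDeriv ν x).toReal)⁻¹ ∂μ := by
          exact lintegral_congr fun x => this x
      _ ≤ 1 := hlin
      _ < ⊤ := ENNReal.one_lt_top
  have hinv_le : ∫ x, ((μ.rnDeriv ν x).toReal)⁻¹ ∂μ ≤ 1 := by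
    rw [integral_eq_lintegral_of_nonneg_ae
      (ae_of_all _ fun x => inv_nonneg.mpr ENNReal.toReal_nonneg)
      hinv_meas.aestronglyMeasurable]
    calc (∫⁻ x, ENNReal.ofReal ((μ.rnDeriv ν x).toReal)⁻¹ ∂μ).toReal
        ≤ (1 : ℝ≥0∞).toReal := ENNReal.toReal_mono ENNReal.one_ne_top hlin
      _ = 1 := by simp
  have hmono : ∀ᵐ x ∂μ, -Real.log (μ.rnDeriv ν x).toReal
      ≤ ((μ.rnDeriv ν x).toReal)⁻¹ - 1 := by
    filter_upwards [Measure.rnDeriv_pos hμν, hμν.ae_le (Measure.rnDeriv_lt_top μ ν)]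
      with x h0 ht
    have ht0 : 0 < (μ.rnDeriv ν x).toReal := ENNReal.toReal_pos h0.ne' ht.ne
    rw [← Real.log_inv]
    exact Real.log_le_sub_one_of_pos (inv_pos.mpr ht0)
  have h1 : ∫ x, -Real.log (μ.rnDeriv ν x).toReal ∂μ
      ≤ ∫ x, (((μ.rnDeriv ν x).toReal)⁻¹ - 1) ∂μ :=
    integral_mono_ae hint.neg (hinv_int.sub (integrable_const 1)) hmono
  rw [integral_neg] at h1
  rw [integral_sub hinv_int (integrable_const 1)] at h1
  simp only [integral_const, measure_univ, probReal_univ, ENNReal.toReal_one, smul_eq_mul, one_mul] at h1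
  linarith

end Aux

theorem klDiv_decomp {α : Type*} {m : MeasurableSpace α} [m0 : MeasurableSpace α]
    (hm : m ≤ m0) (μ : Measure α) [IsProbabilityMeasure μ]
    {f : α → ℝ} (hf : Measurable f) (hf0 : ∀ x, 0 ≤ f x)
    (hfpos : 0 < ∫ x, f x ∂μ) (hfInt : Integrable f μ)
    {G : α → ℝ} (hG : Measurable[m] G) (hG0 : ∀ x, 0 ≤ G x)
    (hGpos : 0 < ∫ x, G x ∂μ) (hGInt : Integrable G μ) :
    klDiv (normWithDensity μ f) (normWithDensity μ G)
        = klDiv (normWithDensity μ f) (normWithDensity μ (μ[f|m]))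
          + klDiv (normWithDensity μ (μ[f|m])) (normWithDensity μ G) ∧
    klDiv (normWithDensity μ f) (normWithDensity μ (μ[f|m]))
        ≤ klDiv (normWithDensity μ f) (normWithDensity μ G) := by
  have hE_sm : StronglyMeasurable[m] (μ[f|m]) := stronglyMeasurable_condExp
  have hE_meas : Measurable (μ[f|m]) := hE_sm.measurable.mono hm le_rfl
  have hE0 : 0 ≤ᵐ[μ] μ[f|m] := condExp_nonneg (ae_of_all μ hf0)
  have hE_int : Integrable (μ[f|m]) μ := integrable_condExp
  have hEI : ∫ x, (μ[f|m]) x ∂μ = ∫ x, f x ∂μ := integral_condExp hm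
  have hEpos : 0 < ∫ x, (μ[f|m]) x ∂μ := hEI ▸ hfpos
  have hGm : Measurable G := hG.mono hm le_rfl
  -- a.e., E = 0 → f = 0
  have hEf : ∀ᵐ x ∂μ, (μ[f|m]) x = 0 → f x = 0 := by
    have hAσ : MeasurableSet[m] ((μ[f|m]) ⁻¹' {0}) :=
      hE_sm.measurable (measurableSet_singleton 0)
    have hA : MeasurableSet ((μ[f|m]) ⁻¹' {0}) := hm _ hAσ
    have h1 : ∫ x in (μ[f|m]) ⁻¹' {0}, f x ∂μ = 0 := by
      rw [← setIntegral_condExp hm hfInt hAσ]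
      calc ∫ x in (μ[f|m]) ⁻¹' {0}, (μ[f|m]) x ∂μ
          = ∫ x in (μ[f|m]) ⁻¹' {0}, (0 : ℝ) ∂μ :=
            setIntegral_congr_fun hA fun x hx => hx
        _ = 0 := by simp
    have h2 : f =ᵐ[μ.restrict ((μ[f|m]) ⁻¹' {0})] 0 :=
      (integral_eq_zero_iff_of_nonneg_ae (ae_of_all _ hf0) hfInt.restrict).mp h1
    have h3 : ∀ᵐ x ∂μ.restrict ((μ[f|m]) ⁻¹' {0}), f x = 0 := h2
    exact (ae_restrict_iff' hA).mp h3
  haveI hP1 : IsProbabilityMeasure (normWithDensity μ f) :=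
    isProbability_normWithDensity μ (ae_of_all _ hf0) hfpos hfInt
  haveI hP2 : IsProbabilityMeasure (normWithDensity μ (μ[f|m])) :=
    isProbability_normWithDensity μ hE0 hEpos hE_int
  haveI hP3 : IsProbabilityMeasure (normWithDensity μ G) :=
    isProbability_normWithDensity μ (ae_of_all _ hG0) hGpos hGInt
  -- first density representation: ν ≪ ν*
  set ψ₁ : α → ℝ≥0∞ := fun x =>
    (ENNReal.ofReal (∫ x, (μ[f|m]) x ∂μ) * (ENNReal.ofReal (∫ x, f x ∂μ))⁻¹) *
      (ENNReal.ofReal (f x) * (ENNReal.ofReal ((μ[f|m]) x))⁻¹) with hψ₁def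
  have hψ₁m : Measurable ψ₁ :=
    measurable_const.mul (hf.ennreal_ofReal.mul hE_meas.ennreal_ofReal.inv)
  have hrep₁ : normWithDensity μ f = (normWithDensity μ (μ[f|m])).withDensity ψ₁ :=
    normWithDensity_eq_withDensity μ hf hE_meas hE0 hfpos hEpos hEf
  have hac₁ : normWithDensity μ f ≪ normWithDensity μ (μ[f|m]) := by
    rw [hrep₁]; exact withDensity_absolutelyContinuous _ _
  have hR1 : (normWithDensity μ f).rnDeriv (normWithDensity μ (μ[f|m]))
      =ᵐ[normWithDensity μ (μ[f|m])] ψ₁ := by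
    have := Measure.rnDeriv_withDensity (normWithDensity μ (μ[f|m])) hψ₁m
    rw [← hrep₁] at this; exact this
  -- trim equality and transfer
  have htrim : (normWithDensity μ f).trim hm = (normWithDensity μ (μ[f|m])).trim hm := by
    refine @Measure.ext α m _ _ fun s hs => ?_
    rw [trim_measurableSet_eq hm hs, trim_measurableSet_eq hm hs]
    have hsm : MeasurableSet s := hm s hs
    rw [normWithDensity, normWithDensity, Measure.smul_apply, Measure.smul_apply,
      withDensity_apply _ hsm, withDensity_apply _ hsm,
      ← ofReal_integral_eq_lintegral_ofReal hfInt.restrict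
        (ae_restrict_of_ae (ae_of_all _ hf0)),
      ← ofReal_integral_eq_lintegral_ofReal hE_int.restrict (ae_restrict_of_ae hE0),
      setIntegral_condExp hm hfInt hs, hEI]
  have htransfer : ∀ h : α → ℝ, StronglyMeasurable[m] h →
      (Integrable h (normWithDensity μ f) ↔ Integrable h (normWithDensity μ (μ[f|m])))
        ∧ ∫ x, h x ∂(normWithDensity μ f) = ∫ x, h x ∂(normWithDensity μ (μ[f|m])) := by
    intro h hh
    refine ⟨⟨fun hi => ?_, fun hi => ?_⟩, ?_⟩
    · have := hi.trim hm hh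
      rw [htrim] at this
      exact integrable_of_integrable_trim hm this
    · have := hi.trim hm hh
      rw [← htrim] at this
      exact integrable_of_integrable_trim hm this
    · rw [integral_trim hm hh, integral_trim hm hh, htrim]
  by_cases hAE : ∀ᵐ x ∂μ, G x = 0 → (μ[f|m]) x = 0
  · -- absolutely continuous case
    set ψ₂ : α → ℝ≥0∞ := fun x =>
      (ENNReal.ofReal (∫ x, G x ∂μ) * (ENNReal.ofReal (∫ x, (μ[f|m]) x ∂μ))⁻¹) *
        (ENNReal.ofReal ((μ[f|m]) x) * (ENNReal.ofReal (G x))⁻¹) with hψ₂def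
    have hψ₂m : Measurable ψ₂ :=
      measurable_const.mul (hE_meas.ennreal_ofReal.mul hGm.ennreal_ofReal.inv)
    have hrep₂ : normWithDensity μ (μ[f|m]) = (normWithDensity μ G).withDensity ψ₂ :=
      normWithDensity_eq_withDensity μ hE_meas hGm (ae_of_all _ hG0) hEpos hGpos hAE
    have hac₂ : normWithDensity μ (μ[f|m]) ≪ normWithDensity μ G := by
      rw [hrep₂]; exact withDensity_absolutelyContinuous _ _
    have hR2 : (normWithDensity μ (μ[f|m])).rnDeriv (normWithDensity μ G)
        =ᵐ[normWithDensity μ G] ψ₂ := by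
      have := Measure.rnDeriv_withDensity (normWithDensity μ G) hψ₂m
      rw [← hrep₂] at this; exact this
    have hac : normWithDensity μ f ≪ normWithDensity μ G := hac₁.trans hac₂
    have hψ₂m' : Measurable[m] ψ₂ := by
      refine Measurable.mul measurable_const ?_
      exact (hE_sm.measurable.ennreal_ofReal.mul hG.ennreal_ofReal.inv)
    have hR1ν := hac₁.ae_le hR1
    have hR2ν := hac₁.ae_le (hac₂.ae_le hR2)
    have hR2νs := hac₂.ae_le hR2
    have hchain := hac.ae_le
      (Measure.rnDeriv_mul_rnDeriv (κ := normWithDensity μ G) hac₁)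
    have hpos1 := Measure.rnDeriv_pos hac₁
    have hlt1 := hac₁.ae_le (Measure.rnDeriv_lt_top (normWithDensity μ f)
      (normWithDensity μ (μ[f|m])))
    have hpos2 := hac₁.ae_le (Measure.rnDeriv_pos hac₂)
    have hlt2 := hac.ae_le (Measure.rnDeriv_lt_top (normWithDensity μ (μ[f|m]))
      (normWithDensity μ G))
    have hLsum : (fun x => Real.log
          ((normWithDensity μ f).rnDeriv (normWithDensity μ G) x).toReal)
        =ᵐ[normWithDensity μ f]
        (fun x => Real.log
            ((normWithDensity μ f).rnDeriv (normWithDensity μ (μ[f|m])) x).toReal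
          + Real.log
            ((normWithDensity μ (μ[f|m])).rnDeriv (normWithDensity μ G) x).toReal) := by
      filter_upwards [hchain, hpos1, hlt1, hpos2, hlt2] with x hc h1 h2 h3 h4
      rw [← hc, Pi.mul_apply, ENNReal.toReal_mul,
        Real.log_mul (ENNReal.toReal_pos h1.ne' h2.ne).ne'
          (ENNReal.toReal_pos h3.ne' h4.ne).ne']
    have hL₂eq : (fun x => Real.log
          ((normWithDensity μ (μ[f|m])).rnDeriv (normWithDensity μ G) x).toReal)
        =ᵐ[normWithDensity μ f] (fun x => Real.log (ψ₂ x).toReal) := by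
      filter_upwards [hR2ν] with x hx; rw [hx]
    have hL₂eqs : (fun x => Real.log
          ((normWithDensity μ (μ[f|m])).rnDeriv (normWithDensity μ G) x).toReal)
        =ᵐ[normWithDensity μ (μ[f|m])] (fun x => Real.log (ψ₂ x).toReal) := by
      filter_upwards [hR2νs] with x hx; rw [hx]
    have hn₁ : Integrable (fun x => max (-Real.log
        ((normWithDensity μ f).rnDeriv (normWithDensity μ (μ[f|m])) x).toReal) 0)
        (normWithDensity μ f) := integrable_neg_part_llr hac₁
    have hn₂s : Integrable (fun x => max (-Real.log
        ((normWithDensity μ (μ[f|m])).rnDeriv (normWithDensity μ G) x).toReal) 0)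
        (normWithDensity μ (μ[f|m])) := integrable_neg_part_llr hac₂
    have hmaxsm : StronglyMeasurable[m] (fun x => max (-Real.log (ψ₂ x).toReal) 0) :=
      ((hψ₂m'.ennreal_toReal.log.neg).max measurable_const).stronglyMeasurable
    have hn₂'s : Integrable (fun x => max (-Real.log (ψ₂ x).toReal) 0)
        (normWithDensity μ (μ[f|m])) :=
      hn₂s.congr (by filter_upwards [hL₂eqs] with x hx; rw [hx])
    have hn₂'ν : Integrable (fun x => max (-Real.log (ψ₂ x).toReal) 0)
        (normWithDensity μ f) := ((htransfer _ hmaxsm).1).mpr hn₂'s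
    have hn₂ν : Integrable (fun x => max (-Real.log
        ((normWithDensity μ (μ[f|m])).rnDeriv (normWithDensity μ G) x).toReal) 0)
        (normWithDensity μ f) :=
      hn₂'ν.congr (by filter_upwards [hL₂eq] with x hx; rw [hx])
    by_cases hInt2 : Integrable (fun x => Real.log
        ((normWithDensity μ (μ[f|m])).rnDeriv (normWithDensity μ G) x).toReal)
        (normWithDensity μ (μ[f|m]))
    · have hInt2' : Integrable (fun x => Real.log (ψ₂ x).toReal)
          (normWithDensity μ (μ[f|m])) := hInt2.congr hL₂eqs
      have hInt2ν : Integrable (fun x => Real.log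
          ((normWithDensity μ (μ[f|m])).rnDeriv (normWithDensity μ G) x).toReal)
          (normWithDensity μ f) :=
        (((htransfer _ (hψ₂m'.ennreal_toReal.log.stronglyMeasurable)).1).mpr
          hInt2').congr hL₂eq.symm
      have hIntegral₂ : ∫ x, Real.log
            ((normWithDensity μ (μ[f|m])).rnDeriv (normWithDensity μ G) x).toReal
            ∂(normWithDensity μ f)
          = ∫ x, Real.log
            ((normWithDensity μ (μ[f|m])).rnDeriv (normWithDensity μ G) x).toReal
            ∂(normWithDensity μ (μ[f|m])) := by
        rw [integral_congr_ae hL₂eq, integral_congr_ae hL₂eqs,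
          (htransfer _ (hψ₂m'.ennreal_toReal.log.stronglyMeasurable)).2]
      by_cases hInt1 : Integrable (fun x => Real.log
          ((normWithDensity μ f).rnDeriv (normWithDensity μ (μ[f|m])) x).toReal)
          (normWithDensity μ f)
      · have hIntL : Integrable (fun x => Real.log
            ((normWithDensity μ f).rnDeriv (normWithDensity μ G) x).toReal)
            (normWithDensity μ f) := (hInt1.add hInt2ν).congr hLsum.symm
        have hb : 0 ≤ ∫ x, Real.log
            ((normWithDensity μ (μ[f|m])).rnDeriv (normWithDensity μ G) x).toReal
            ∂(normWithDensity μ (μ[f|m])) := integral_log_rnDeriv_nonneg hac₂ hInt2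
        have k1 : klDiv (normWithDensity μ f) (normWithDensity μ G)
            = ((∫ x, Real.log ((normWithDensity μ f).rnDeriv (normWithDensity μ G) x).toReal
              ∂(normWithDensity μ f) : ℝ) : EReal) := by
          unfold klDiv; exact if_pos ⟨hac, hIntL⟩
        have k2 : klDiv (normWithDensity μ f) (normWithDensity μ (μ[f|m]))
            = ((∫ x, Real.log
              ((normWithDensity μ f).rnDeriv (normWithDensity μ (μ[f|m])) x).toReal
              ∂(normWithDensity μ f) : ℝ) : EReal) := by
          unfold klDiv; exact if_pos ⟨hac₁, hInt1⟩
        have k3 : klDiv (normWithDensity μ (μ[f|m])) (normWithDensity μ G)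
            = ((∫ x, Real.log
              ((normWithDensity μ (μ[f|m])).rnDeriv (normWithDensity μ G) x).toReal
              ∂(normWithDensity μ (μ[f|m])) : ℝ) : EReal) := by
          unfold klDiv; exact if_pos ⟨hac₂, hInt2⟩
        constructor
        · rw [k1, k2, k3, ← EReal.coe_add, EReal.coe_eq_coe_iff,
            integral_congr_ae hLsum, integral_add hInt1 hInt2ν, hIntegral₂]
        · rw [k1, k2, EReal.coe_le_coe_iff,
            integral_congr_ae hLsum, integral_add hInt1 hInt2ν, hIntegral₂]
          linarith
      · have hIntL : ¬ Integrable (fun x => Real.log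
            ((normWithDensity μ f).rnDeriv (normWithDensity μ G) x).toReal)
            (normWithDensity μ f) := by
          intro hL
          refine hInt1 (Integrable.mono' (hL.abs.add (hn₁.add hn₂ν))
            ((Measure.measurable_rnDeriv _ _).ennreal_toReal.log.aestronglyMeasurable) ?_)
          filter_upwards [hLsum] with x hx
          have e1 := le_max_left (-(Real.log
            ((normWithDensity μ f).rnDeriv (normWithDensity μ (μ[f|m])) x).toReal)) 0
          have e2 := le_max_left (-(Real.log
            ((normWithDensity μ (μ[f|m])).rnDeriv (normWithDensity μ G) x).toReal)) 0
          have e3 := le_max_right (-(Real.log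
            ((normWithDensity μ f).rnDeriv (normWithDensity μ (μ[f|m])) x).toReal)) 0
          have e4 := le_max_right (-(Real.log
            ((normWithDensity μ (μ[f|m])).rnDeriv (normWithDensity μ G) x).toReal)) 0
          have e5 := le_abs_self (Real.log
            ((normWithDensity μ f).rnDeriv (normWithDensity μ G) x).toReal)
          have e6 := neg_abs_le (Real.log
            ((normWithDensity μ f).rnDeriv (normWithDensity μ G) x).toReal)
          simp only [Pi.add_apply]
          rw [Real.norm_eq_abs, abs_le]
          constructor <;> linarith [hx]
        have htop1 : klDiv (normWithDensity μ f) (normWithDensity μ G) = ⊤ := by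
          unfold klDiv; rw [if_neg (fun h => hIntL h.2)]
        have htop2 : klDiv (normWithDensity μ f) (normWithDensity μ (μ[f|m])) = ⊤ := by
          unfold klDiv; rw [if_neg (fun h => hInt1 h.2)]
        refine ⟨?_, ?_⟩
        · rw [htop1, htop2, EReal.top_add_of_ne_bot (klDiv_ne_bot _ _)]
        · rw [htop1]; exact le_top
    · have hInt2' : ¬ Integrable (fun x => Real.log (ψ₂ x).toReal)
          (normWithDensity μ (μ[f|m])) := fun h => hInt2 (h.congr hL₂eqs.symm)
      have hInt2ν : ¬ Integrable (fun x => Real.log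
          ((normWithDensity μ (μ[f|m])).rnDeriv (normWithDensity μ G) x).toReal)
          (normWithDensity μ f) := by
        intro h
        exact hInt2' (((htransfer _
          (hψ₂m'.ennreal_toReal.log.stronglyMeasurable)).1).mp (h.congr hL₂eq))
      have hIntL : ¬ Integrable (fun x => Real.log
          ((normWithDensity μ f).rnDeriv (normWithDensity μ G) x).toReal)
          (normWithDensity μ f) := by
        intro hL
        refine hInt2ν (Integrable.mono' (hL.abs.add (hn₁.add hn₂ν))
          ((Measure.measurable_rnDeriv _ _).ennreal_toReal.log.aestronglyMeasurable) ?_)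
        filter_upwards [hLsum] with x hx
        have e1 := le_max_left (-(Real.log
          ((normWithDensity μ f).rnDeriv (normWithDensity μ (μ[f|m])) x).toReal)) 0
        have e2 := le_max_left (-(Real.log
          ((normWithDensity μ (μ[f|m])).rnDeriv (normWithDensity μ G) x).toReal)) 0
        have e3 := le_max_right (-(Real.log
          ((normWithDensity μ f).rnDeriv (normWithDensity μ (μ[f|m])) x).toReal)) 0
        have e4 := le_max_right (-(Real.log
          ((normWithDensity μ (μ[f|m])).rnDeriv (normWithDensity μ G) x).toReal)) 0
        have e5 := le_abs_self (Real.log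
          ((normWithDensity μ f).rnDeriv (normWithDensity μ G) x).toReal)
        have e6 := neg_abs_le (Real.log
          ((normWithDensity μ f).rnDeriv (normWithDensity μ G) x).toReal)
        simp only [Pi.add_apply]
        rw [Real.norm_eq_abs, abs_le]
        constructor <;> linarith [hx]
      have htop1 : klDiv (normWithDensity μ f) (normWithDensity μ G) = ⊤ := by
        unfold klDiv; rw [if_neg (fun h => hIntL h.2)]
      have htop2 : klDiv (normWithDensity μ (μ[f|m])) (normWithDensity μ G) = ⊤ := by
        unfold klDiv; rw [if_neg (fun h => hInt2 h.2)]
      refine ⟨?_, ?_⟩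
      · rw [htop1, htop2, EReal.add_top_of_ne_bot (klDiv_ne_bot _ _)]
      · rw [htop1]; exact le_top
  · -- non absolutely continuous case
    have hAσ : MeasurableSet[m] (G ⁻¹' {0}) := hG (measurableSet_singleton 0)
    have hA : MeasurableSet (G ⁻¹' {0}) := hm _ hAσ
    have hνrA : normWithDensity μ G (G ⁻¹' {0}) = 0 := by
      rw [normWithDensity, Measure.smul_apply, withDensity_apply _ hA, smul_eq_mul]
      have h0 : ∫⁻ x in G ⁻¹' {0}, ENNReal.ofReal (G x) ∂μ
          = ∫⁻ x in G ⁻¹' {0}, 0 ∂μ :=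
        setLIntegral_congr_fun hA (fun x hx => by
          rw [Set.mem_preimage, Set.mem_singleton_iff] at hx
          rw [hx, ENNReal.ofReal_zero])
      rw [h0, lintegral_zero, mul_zero]
    have hEA : ¬ (∀ᵐ x ∂μ.restrict (G ⁻¹' {0}), (μ[f|m]) x = 0) := by
      intro h
      refine hAE (((ae_restrict_iff' hA).mp h).mono fun x hx hx0 => hx hx0)
    have hνsA : normWithDensity μ (μ[f|m]) (G ⁻¹' {0}) ≠ 0 := by
      rw [normWithDensity, Measure.smul_apply, withDensity_apply _ hA, smul_eq_mul]
      intro h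
      have hZ : (ENNReal.ofReal (∫ x, (μ[f|m]) x ∂μ))⁻¹ ≠ 0 :=
        ENNReal.inv_ne_zero.mpr ENNReal.ofReal_ne_top
      have hl : ∫⁻ x in G ⁻¹' {0}, ENNReal.ofReal ((μ[f|m]) x) ∂μ = 0 :=
        (mul_eq_zero.mp h).resolve_left hZ
      rw [lintegral_eq_zero_iff hE_meas.ennreal_ofReal] at hl
      refine hEA ?_
      filter_upwards [hl, ae_restrict_of_ae hE0] with x h1 h2
      simp only [Pi.zero_apply] at h1 h2
      have := ENNReal.ofReal_eq_zero.mp h1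
      linarith
    have hνA : normWithDensity μ f (G ⁻¹' {0}) ≠ 0 := by
      rw [normWithDensity, Measure.smul_apply, withDensity_apply _ hA, smul_eq_mul]
      intro h
      have hZ : (ENNReal.ofReal (∫ x, f x ∂μ))⁻¹ ≠ 0 :=
        ENNReal.inv_ne_zero.mpr ENNReal.ofReal_ne_top
      have hl : ∫⁻ x in G ⁻¹' {0}, ENNReal.ofReal (f x) ∂μ = 0 :=
        (mul_eq_zero.mp h).resolve_left hZ
      rw [lintegral_eq_zero_iff hf.ennreal_ofReal] at hl
      have hf0' : f =ᵐ[μ.restrict (G ⁻¹' {0})] 0 := by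
        filter_upwards [hl] with x h1
        simp only [Pi.zero_apply] at h1 ⊢
        have := ENNReal.ofReal_eq_zero.mp h1
        have := hf0 x
        linarith
      have hintf : ∫ x in G ⁻¹' {0}, f x ∂μ = 0 := by
        rw [integral_congr_ae hf0']; simp
      have hintE : ∫ x in G ⁻¹' {0}, (μ[f|m]) x ∂μ = 0 := by
        rw [setIntegral_condExp hm hfInt hAσ]; exact hintf
      exact hEA ((integral_eq_zero_iff_of_nonneg_ae
        (ae_restrict_of_ae hE0) hE_int.restrict).mp hintE)
    have hnac : ¬ normWithDensity μ f ≪ normWithDensity μ G := fun hc => hνA (hc hνrA)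
    have hnacs : ¬ normWithDensity μ (μ[f|m]) ≪ normWithDensity μ G :=
      fun hc => hνsA (hc hνrA)
    have htop1 : klDiv (normWithDensity μ f) (normWithDensity μ G) = ⊤ := by
      unfold klDiv; rw [if_neg (fun h => hnac h.1)]
    have htop2 : klDiv (normWithDensity μ (μ[f|m])) (normWithDensity μ G) = ⊤ := by
      unfold klDiv; rw [if_neg (fun h => hnacs h.1)]
    refine ⟨?_, ?_⟩
    · rw [htop1, htop2, EReal.add_top_of_ne_bot (klDiv_ne_bot _ _)]
    · rw [htop1]; exact le_top

/-- **Decomposition and optimality of the conditional-expectation profile.**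
With `dν/dμ ∝ f`, `dν_r/dμ ∝ g ∘ P_r` and `dν_r*/dμ ∝ E_μ(f | σ(P_r))`, one has
`D_KL(ν‖ν_r) = D_KL(ν‖ν_r*) + D_KL(ν_r*‖ν_r)`, hence `D_KL(ν‖ν_r) ≥ D_KL(ν‖ν_r*)`
for every Borel `g : ℝ^d → ℝ₊`; so any `g*` with `g* ∘ P_r = E_μ(f|σ(P_r))`
minimizes `g ↦ D_KL(ν‖ν_r)`. -/
theorem kl_decomposition_and_optimal_profile (d : ℕ) (μ : Measure (Fin d → ℝ))
    [IsProbabilityMeasure μ]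
    (f : (Fin d → ℝ) → ℝ) (hf : Measurable f) (hf0 : ∀ x, 0 ≤ f x)
    (hfpos : 0 < ∫ x, f x ∂μ) (hfInt : Integrable f μ)
    (P : Matrix (Fin d) (Fin d) ℝ) (hP : P * P = P) :
    ∀ g : (Fin d → ℝ) → ℝ, Measurable g → (∀ x, 0 ≤ g x) →
      0 < ∫ x, g (P.mulVec x) ∂μ → Integrable (fun x => g (P.mulVec x)) μ →
      (klDiv (normWithDensity μ f) (normWithDensity μ (fun x => g (P.mulVec x)))
          = klDiv (normWithDensity μ f)
              (normWithDensity μ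
                (μ[f| MeasurableSpace.comap (fun x => P.mulVec x)
                      (inferInstance : MeasurableSpace (Fin d → ℝ))]))
            + klDiv (normWithDensity μ
                (μ[f| MeasurableSpace.comap (fun x => P.mulVec x)
                      (inferInstance : MeasurableSpace (Fin d → ℝ))]))
                (normWithDensity μ (fun x => g (P.mulVec x)))) ∧
      klDiv (normWithDensity μ f)
          (normWithDensity μ
            (μ[f| MeasurableSpace.comap (fun x => P.mulVec x)
                  (inferInstance : MeasurableSpace (Fin d → ℝ))]))
        ≤ klDiv (normWithDensity μ f)
            (normWithDensity μ (fun x => g (P.mulVec x))) := by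
  intro g hg hg0 hgpos hgInt
  have hφ : Measurable (fun x : Fin d → ℝ => P.mulVec x) := by
    apply measurable_pi_lambda
    intro i
    simp only [Matrix.mulVec, dotProduct]
    exact Finset.measurable_sum _ fun j _ => (measurable_pi_apply j).const_mul _
  exact klDiv_decomp hφ.comap_le μ hf hf0 hfpos hfInt
    (hg.comp (Measurable.of_comap_le le_rfl)) (fun x => hg0 (P.mulVec x)) hgpos hgInt
end

section
/- Let Γ ∈ ℝ^{d×d} be symmetric positive definite and H ∈ ℝ^{d×d} symmetric positive semidefinite. Let (λ_i, v_i) be the generalized eigenpairs of the pencil (H, Γ): H v_i = λ_i Γ v_i with λ_1 ≥ λ_2 ≥ … ≥ λ_d ≥ 0 and ‖v_i‖_Γ = 1. Then for any r ≤ d, the minimum of R_Γ(P_r, H) = trace(Γ⁻¹(I_d − P_rᵀ)H(I_d − P_r)) over all rank-r projectors P_r ∈ ℝ^{d×d} equals λ_{r+1} + ⋯ + λ_d, and this minimum is attained by the Γ-orthogonal projector P_r = (Σ_{i=1}^r v_i v_iᵀ) Γ. -/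
open Matrix

/-- The reconstruction error `R_Γ(P, H) = trace(Γ⁻¹ (I − Pᵀ) H (I − P))`. -/
noncomputable def reconErr {d : ℕ} (Γ P H : Matrix (Fin d) (Fin d) ℝ) : ℝ :=
  (Γ⁻¹ * (1 - Pᵀ) * H * (1 - P)).trace

lemma aux_mul_vecMulVec {d : ℕ} (M : Matrix (Fin d) (Fin d) ℝ) (x y : Fin d → ℝ) :
    M * vecMulVec x y = vecMulVec (M.mulVec x) y := by
  ext a b
  simp [Matrix.mul_apply, vecMulVec_apply, mulVec, dotProduct, Finset.sum_mul, mul_assoc]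

lemma aux_vecMulVec_mul_vecMulVec {d : ℕ} (x y z w : Fin d → ℝ) :
    vecMulVec x y * vecMulVec z w = (y ⬝ᵥ z) • vecMulVec x w := by
  ext a b
  simp [Matrix.mul_apply, vecMulVec_apply, dotProduct, Finset.mul_sum, Finset.sum_mul]
  ring_nf
  apply Finset.sum_congr rfl; intros; ring

lemma aux_card_lt {d r : ℕ} (hr : r ≤ d) :
    (Finset.univ.filter (fun i : Fin d => (i : ℕ) < r)).card = r := by
  have : (Finset.univ.filter (fun i : Fin d => (i : ℕ) < r)) =
      Finset.map (Fin.castLEEmb hr) Finset.univ := by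
    ext i
    simp only [Finset.mem_filter, Finset.mem_univ, true_and, Finset.mem_map]
    constructor
    · intro h; exact ⟨⟨i, h⟩, by simp [Fin.castLEEmb, Fin.ext_iff]⟩
    · rintro ⟨j, rfl⟩; simpa using j.2
  rw [this]; simp

lemma aux_rearr {d r : ℕ} (hr : r ≤ d) (lam : Fin d → ℝ)
    (hdec : ∀ i j : Fin d, i ≤ j → lam j ≤ lam i) (hnonneg : ∀ i, 0 ≤ lam i)
    (t : Fin d → ℝ) (ht0 : ∀ j, 0 ≤ t j) (ht1 : ∀ j, t j ≤ 1)
    (hsum : ∑ j, t j = ((d - r : ℕ) : ℝ)) :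
    ∑ i ∈ Finset.univ.filter (fun i : Fin d => r ≤ (i : ℕ)), lam i ≤ ∑ j, lam j * t j := by
  have hind : ∑ j : Fin d, (if r ≤ (j : ℕ) then (1:ℝ) else 0) = ((d - r : ℕ) : ℝ) := by
    rw [← Finset.sum_filter]
    have : (Finset.univ.filter (fun i : Fin d => r ≤ (i : ℕ))).card = d - r := by
      have h1 : (Finset.univ.filter (fun i : Fin d => r ≤ (i : ℕ))) =
          (Finset.univ.filter (fun i : Fin d => (i : ℕ) < r))ᶜ := by ext i; simp [not_lt]
      rw [h1, Finset.card_compl, aux_card_lt hr]; simp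
    rw [Finset.sum_const, this]; simp
  rcases lt_or_ge r d with hrd | hge
  case inr =>
    have h0 : (Finset.univ.filter (fun i : Fin d => r ≤ (i : ℕ))) = ∅ := by
      ext i; simp; omega
    rw [h0, Finset.sum_empty]
    exact Finset.sum_nonneg fun j _ => mul_nonneg (hnonneg j) (ht0 j)
  case inl =>
    set p : Fin d := ⟨r, hrd⟩ with hp
    have key : ∑ j : Fin d, lam p * (t j - (if r ≤ (j : ℕ) then (1:ℝ) else 0)) ≤
        ∑ j : Fin d, (lam j * t j - (if r ≤ (j : ℕ) then lam j else 0)) := by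
      apply Finset.sum_le_sum
      intro j _
      by_cases hj : r ≤ (j : ℕ)
      · simp only [hj, if_true]
        have h1 : lam j ≤ lam p := hdec p j (by simpa [hp, Fin.le_def])
        nlinarith [ht1 j]
      · simp only [hj, if_false]
        have h2 : lam p ≤ lam j := hdec j p (by simp [hp, Fin.le_def]; omega)
        nlinarith [ht0 j]
    have hz : ∑ j : Fin d, lam p * (t j - (if r ≤ (j : ℕ) then (1:ℝ) else 0)) = 0 := by
      rw [← Finset.mul_sum, Finset.sum_sub_distrib, hsum, hind, sub_self, mul_zero]
    rw [hz] at key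
    rw [Finset.sum_sub_distrib] at key
    rw [← Finset.sum_filter] at key
    linarith

lemma aux_inner_eq_dot {d : ℕ} (u v : EuclideanSpace ℝ (Fin d)) :
    (inner ℝ u v : ℝ) = (fun j => u j) ⬝ᵥ (fun j => v j) := by
  simp [PiLp.inner_apply, RCLike.inner_apply, dotProduct, mul_comm]

lemma aux_exists_onb {d k : ℕ} (M : Matrix (Fin d) (Fin d) ℝ) (hM : M * M = M)
    (hrank : M.rank = k) :
    ∃ w : Fin k → (Fin d → ℝ),
      (∀ i j, w i ⬝ᵥ w j = if i = j then 1 else 0) ∧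
      (∀ i, M.mulVec (w i) = w i) ∧
      (∀ x : Fin d → ℝ, ∑ i, (w i ⬝ᵥ x)^2 ≤ x ⬝ᵥ x) := by
  classical
  let K : Submodule ℝ (EuclideanSpace ℝ (Fin d)) := (LinearMap.range M.mulVecLin).map (WithLp.linearEquiv 2 ℝ (Fin d → ℝ)).symm.toLinearMap
  have hfr : Module.finrank ℝ K = k := by rw [← hrank]; exact LinearEquiv.finrank_map_eq _ _
  obtain ⟨b, hbo⟩ : ∃ b : Fin k → K, Orthonormal ℝ b :=
    ⟨(stdOrthonormalBasis ℝ K).reindex (finCongr hfr),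
     ((stdOrthonormalBasis ℝ K).reindex (finCongr hfr)).orthonormal⟩
  have hbo' : Orthonormal ℝ (fun i => (↑(b i) : EuclideanSpace ℝ (Fin d))) := by
    rw [orthonormal_iff_ite] at hbo ⊢
    intro i j
    rw [← Submodule.coe_inner]
    exact hbo i j
  have hbo2 := hbo'
  rw [orthonormal_iff_ite] at hbo2
  refine ⟨fun i j => (↑(b i) : EuclideanSpace ℝ (Fin d)) j, ?_, ?_, ?_⟩
  · intro i j
    have h2 := hbo2 i j
    rw [aux_inner_eq_dot] at h2
    exact h2
  · intro i
    obtain ⟨z, ⟨y, hy0⟩, hy⟩ := (b i).2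
    have hy' : M.mulVec y = fun j => (↑(b i) : EuclideanSpace ℝ (Fin d)) j := by
      rw [← hy, ← hy0]; rfl
    show M.mulVec (fun j => (↑(b i) : EuclideanSpace ℝ (Fin d)) j) = fun j => (↑(b i) : EuclideanSpace ℝ (Fin d)) j
    rw [← hy', Matrix.mulVec_mulVec, hM]
  · intro x
    have hbes := hbo'.sum_inner_products_le
      (WithLp.toLp 2 x : EuclideanSpace ℝ (Fin d)) (s := Finset.univ)
    have e1 : ∀ i : Fin k, ‖(inner ℝ (↑(b i) : EuclideanSpace ℝ (Fin d)) (WithLp.toLp 2 x : EuclideanSpace ℝ (Fin d)) : ℝ)‖^2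
        = ((fun j => (↑(b i) : EuclideanSpace ℝ (Fin d)) j) ⬝ᵥ x)^2 := by
      intro i
      rw [Real.norm_eq_abs, sq_abs, aux_inner_eq_dot]
    have e2 : ‖(WithLp.toLp 2 x : EuclideanSpace ℝ (Fin d))‖^2 = x ⬝ᵥ x := by
      rw [← real_inner_self_eq_norm_sq, aux_inner_eq_dot]
    calc ∑ i : Fin k, ((fun j => (↑(b i) : EuclideanSpace ℝ (Fin d)) j) ⬝ᵥ x)^2
        = ∑ i : Fin k, ‖(inner ℝ (↑(b i) : EuclideanSpace ℝ (Fin d)) (WithLp.toLp 2 x : EuclideanSpace ℝ (Fin d)) : ℝ)‖^2 :=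
          (Finset.sum_congr rfl (fun i _ => (e1 i))).symm
      _ ≤ ‖(WithLp.toLp 2 x : EuclideanSpace ℝ (Fin d))‖^2 := hbes
      _ = x ⬝ᵥ x := e2

lemma aux_trace_diag_mul {d : ℕ} (lam : Fin d → ℝ) (A : Matrix (Fin d) (Fin d) ℝ) :
    (diagonal lam * A).trace = ∑ j, lam j * A j j := by
  simp [Matrix.trace, Matrix.diag, Matrix.diagonal_mul]

/-- **Optimal projector for the reconstruction error.**
Let `(λ_i, v_i)` be a complete `Γ`-orthonormal system of generalized eigenpairs
of the pencil `(H, Γ)`, `H v_i = λ_i Γ v_i`, ordered decreasingly.  Then for any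
`r ≤ d`, `λ_{r+1} + ⋯ + λ_d` is a lower bound of `R_Γ(P, H)` over all rank-`r`
projectors `P`, and it is attained by the `Γ`-orthogonal projector
`P_r = (Σ_{i≤r} v_i v_iᵀ) Γ`. -/
theorem optimal_projector (d r : ℕ) (hr : r ≤ d)
    (Γ H : Matrix (Fin d) (Fin d) ℝ) (hΓ : Γ.PosDef) (hH : H.PosSemidef)
    (lam : Fin d → ℝ) (v : Fin d → Fin d → ℝ)
    (heig : ∀ i, H.mulVec (v i) = lam i • Γ.mulVec (v i))
    (hdec : ∀ i j : Fin d, i ≤ j → lam j ≤ lam i)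
    (hnonneg : ∀ i, 0 ≤ lam i)
    (horth : ∀ i j : Fin d, v i ⬝ᵥ Γ.mulVec (v j) = if i = j then 1 else 0) :
    (∀ P : Matrix (Fin d) (Fin d) ℝ, P * P = P → P.rank = r →
      ∑ i ∈ Finset.univ.filter (fun i : Fin d => r ≤ (i : ℕ)), lam i ≤ reconErr Γ P H) ∧
    (let Pr : Matrix (Fin d) (Fin d) ℝ :=
      (∑ i ∈ Finset.univ.filter (fun i : Fin d => (i : ℕ) < r),
        vecMulVec (v i) (v i)) * Γ
     Pr * Pr = Pr ∧ Pr.rank = r ∧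
      (∀ x : Fin d → ℝ, x ⬝ᵥ Γ.mulVec x =
        (Pr.mulVec x) ⬝ᵥ Γ.mulVec (Pr.mulVec x) +
          ((1 - Pr).mulVec x) ⬝ᵥ Γ.mulVec ((1 - Pr).mulVec x)) ∧
      reconErr Γ Pr H =
        ∑ i ∈ Finset.univ.filter (fun i : Fin d => r ≤ (i : ℕ)), lam i) := by
  classical
  set V : Matrix (Fin d) (Fin d) ℝ := Matrix.of (fun j i => v i j) with hV
  set W : Matrix (Fin d) (Fin d) ℝ := Vᵀ * Γ with hW
  set D : Matrix (Fin d) (Fin d) ℝ := diagonal lam with hD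
  have hΓs : Γᵀ = Γ := by
    ext i j
    rw [transpose_apply]
    conv_rhs => rw [← hΓ.isHermitian]
    simp [conjTranspose_apply]
  have hWV : W * V = 1 := by
    ext i j
    rw [hW, Matrix.mul_assoc]
    have : (Γ * V) = Matrix.of (fun l k => Γ.mulVec (v k) l) := by
      ext l k
      simp [Matrix.mul_apply, mulVec, dotProduct, hV]
    rw [this]
    simp only [Matrix.mul_apply, transpose_apply, Matrix.of_apply, hV]
    have := horth i j
    simp only [dotProduct] at this
    rw [this, Matrix.one_apply]
  have hVW : V * W = 1 := mul_eq_one_comm.mp hWV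
  have hWt : Wᵀ = Γ * V := by rw [hW, transpose_mul, transpose_transpose, hΓs]
  have hΓinv : Γ⁻¹ = V * Vᵀ := by
    apply Matrix.inv_eq_right_inv
    calc Γ * (V * Vᵀ) = (Γ * V) * Vᵀ := by rw [Matrix.mul_assoc]
    _ = Wᵀ * Vᵀ := by rw [hWt]
    _ = (V * W)ᵀ := (transpose_mul V W).symm
    _ = 1 := by rw [hVW, transpose_one]
  have hHV : H * V = Γ * V * D := by
    ext j i
    have h1 : (H * V) j i = H.mulVec (v i) j := by
      simp [Matrix.mul_apply, mulVec, dotProduct, hV]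
    have h2 : (Γ * V * D) j i = lam i * Γ.mulVec (v i) j := by
      rw [hD, Matrix.mul_diagonal]
      have : (Γ * V) j i = Γ.mulVec (v i) j := by
        simp [Matrix.mul_apply, mulVec, dotProduct, hV]
      rw [this]
      ring
    rw [h1, h2, heig i]
    simp
  have hH' : H = Γ * V * D * W := by
    calc H = H * (V * W) := by rw [hVW, Matrix.mul_one]
    _ = (H * V) * W := by rw [Matrix.mul_assoc]
    _ = Γ * V * D * W := by rw [hHV]
  have hVdet : IsUnit V.det := by
    have : Invertible V := invertibleOfRightInverse V W hVW
    exact Matrix.isUnit_det_of_invertible V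
  have hWdet : IsUnit W.det := by
    have : Invertible W := invertibleOfRightInverse W V hWV
    exact Matrix.isUnit_det_of_invertible W
  -- generic trace identity
  have hErrGen : ∀ P : Matrix (Fin d) (Fin d) ℝ,
      reconErr Γ P H = (D * ((W * (1 - P) * V) * (W * (1 - P) * V)ᵀ)).trace := by
    intro P
    set Q : Matrix (Fin d) (Fin d) ℝ := 1 - P with hQdef
    have hQt : (1 : Matrix (Fin d) (Fin d) ℝ) - Pᵀ = Qᵀ := by
      rw [hQdef, transpose_sub, transpose_one]
    have hMt : (W * Q * V)ᵀ = Vᵀ * (Qᵀ * (Γ * V)) := by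
      rw [transpose_mul, transpose_mul, hWt]
    have e1 : Γ⁻¹ * (1 - Pᵀ) * H * (1 - P) =
        V * (Vᵀ * (Qᵀ * (Γ * (V * (D * (W * Q)))))) := by
      rw [hΓinv, hH', hQt, ← hQdef]
      simp only [Matrix.mul_assoc]
    have e2 : (Vᵀ * (Qᵀ * (Γ * (V * (D * (W * Q)))))) * V =
        (W * Q * V)ᵀ * (D * (W * Q * V)) := by
      rw [hMt]
      simp only [Matrix.mul_assoc]
    rw [reconErr, e1, Matrix.trace_mul_comm, e2, Matrix.trace_mul_comm, Matrix.mul_assoc]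
  constructor
  · -- lower bound
    intro P hP hPrank
    set Q : Matrix (Fin d) (Fin d) ℝ := 1 - P with hQdef
    have hQQ : Q * Q = Q := by
      rw [hQdef, Matrix.sub_mul, Matrix.mul_sub, Matrix.mul_sub, hP]
      simp
    have hrankQ : Q.rank = d - r := by
      have hrange : LinearMap.range Q.mulVecLin = LinearMap.ker P.mulVecLin := by
        apply le_antisymm
        · rintro x ⟨y, rfl⟩
          show P.mulVec (Q.mulVec y) = 0
          rw [Matrix.mulVec_mulVec, hQdef, Matrix.mul_sub, Matrix.mul_one, hP, sub_self,
            Matrix.zero_mulVec]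
        · intro x hx
          have hx' : P.mulVec x = 0 := hx
          refine ⟨x, ?_⟩
          show Q.mulVec x = x
          rw [hQdef, Matrix.sub_mulVec, Matrix.one_mulVec, hx', sub_zero]
      have h1 : Q.rank = Module.finrank ℝ (LinearMap.ker P.mulVecLin) := by
        rw [Matrix.rank, hrange]
      have h2 := LinearMap.finrank_range_add_finrank_ker P.mulVecLin
      rw [Module.finrank_fin_fun] at h2
      have h3 : Module.finrank ℝ (LinearMap.range P.mulVecLin) = r := hPrank
      omega
    set M : Matrix (Fin d) (Fin d) ℝ := W * Q * V with hMdef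
    have hMM : M * M = M := by
      rw [hMdef]
      calc (W * Q * V) * (W * Q * V)
          = W * Q * (V * W) * Q * V := by simp only [Matrix.mul_assoc]
        _ = W * (Q * Q) * V := by rw [hVW]; simp only [Matrix.mul_assoc, Matrix.mul_one]
        _ = W * Q * V := by rw [hQQ, Matrix.mul_assoc]
    have hrankM : M.rank = d - r := by
      rw [hMdef, Matrix.mul_assoc, Matrix.rank_mul_eq_right_of_isUnit_det W _ hWdet,
        Matrix.rank_mul_eq_left_of_isUnit_det V Q hVdet, hrankQ]
    obtain ⟨w, hw1, hw2, hw3⟩ := aux_exists_onb M hMM hrankM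
    set Pim : Matrix (Fin d) (Fin d) ℝ := ∑ i, vecMulVec (w i) (w i) with hPim
    have hPimt : Pimᵀ = Pim := by
      rw [hPim, transpose_sum]
      apply Finset.sum_congr rfl
      intro i _
      ext a b
      simp [vecMulVec_apply, mul_comm]
    have hPimPim : Pim * Pim = Pim := by
      rw [hPim, Finset.sum_mul_sum]
      have : ∀ i ∈ (Finset.univ : Finset (Fin (d-r))),
          ∑ j, vecMulVec (w i) (w i) * vecMulVec (w j) (w j) = vecMulVec (w i) (w i) := by
        intro i _
        have : ∀ j, vecMulVec (w i) (w i) * vecMulVec (w j) (w j) =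
            (if i = j then (1:ℝ) else 0) • vecMulVec (w i) (w j) := by
          intro j; rw [aux_vecMulVec_mul_vecMulVec, hw1]
        rw [Finset.sum_congr rfl (fun j _ => this j)]
        simp [Finset.sum_ite_eq]
      rw [Finset.sum_congr rfl this]
    have hMPim : M * Pim = Pim := by
      rw [hPim, Finset.mul_sum]
      apply Finset.sum_congr rfl
      intro i _
      rw [aux_mul_vecMulVec, hw2]
    have hPimM : Pim * Mᵀ = Pim := by
      have h := congrArg Matrix.transpose hMPim
      rw [transpose_mul M Pim, hPimt] at h
      exact h
    have hdecomp : M * Mᵀ = Pim + (M * (1 - Pim)) * (M * (1 - Pim))ᵀ := by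
      have h1 : (M * (1 - Pim))ᵀ = (1 - Pim) * Mᵀ := by
        rw [transpose_mul M (1 - Pim), transpose_sub, transpose_one, hPimt]
      have h3 : (1 - Pim) * (1 - Pim) = 1 - Pim := by
        rw [Matrix.sub_mul, Matrix.mul_sub, Matrix.mul_sub, hPimPim]
        simp
      have h4 : (M * (1 - Pim)) * ((1 - Pim) * Mᵀ) = M * (1 - Pim) * Mᵀ := by
        calc (M * (1 - Pim)) * ((1 - Pim) * Mᵀ)
            = M * ((1 - Pim) * (1 - Pim)) * Mᵀ := by simp only [Matrix.mul_assoc]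
          _ = M * (1 - Pim) * Mᵀ := by rw [h3]
      have h5 : M * (1 - Pim) * Mᵀ = M * Mᵀ - Pim := by
        rw [Matrix.mul_sub M 1 Pim, Matrix.mul_one, Matrix.sub_mul, hMPim, hPimM]
      rw [h1, h4, h5]
      abel
    set t : Fin d → ℝ := fun j => ∑ i, (w i j)^2 with ht
    have hPimdiag : ∀ j, Pim j j = t j := by
      intro j
      rw [hPim, ht]
      simp [Matrix.sum_apply, vecMulVec_apply, sq]
    have ht0 : ∀ j, 0 ≤ t j := fun j => Finset.sum_nonneg fun i _ => sq_nonneg _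
    have ht1 : ∀ j, t j ≤ 1 := by
      intro j
      have := hw3 (Pi.single j 1)
      have hsgl : ∀ i, w i ⬝ᵥ Pi.single j 1 = w i j := by
        intro i; simp [dotProduct, Pi.single_apply]
      have hss : (Pi.single j 1 : Fin d → ℝ) ⬝ᵥ Pi.single j 1 = 1 := by
        simp [dotProduct, Pi.single_apply]
      rw [hss] at this
      rw [Finset.sum_congr rfl (fun i _ => by rw [hsgl i])] at this
      exact this
    have htsum : ∑ j, t j = ((d - r : ℕ) : ℝ) := by
      rw [ht]
      rw [Finset.sum_comm]
      have : ∀ i, ∑ j, (w i j)^2 = 1 := by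
        intro i
        have h := hw1 i i
        simp only [dotProduct, if_true, eq_self_iff_true] at h
        rw [← h]
        apply Finset.sum_congr rfl
        intros; ring
      rw [Finset.sum_congr rfl (fun i _ => this i)]
      simp
    have hNtr : 0 ≤ (D * ((M * (1 - Pim)) * (M * (1 - Pim))ᵀ)).trace := by
      rw [hD, aux_trace_diag_mul]
      apply Finset.sum_nonneg
      intro j _
      apply mul_nonneg (hnonneg j)
      have : ((M * (1 - Pim)) * (M * (1 - Pim))ᵀ : Matrix (Fin d) (Fin d) ℝ) j j
          = ∑ k, ((M * (1 - Pim)) j k)^2 := by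
        rw [Matrix.mul_apply]
        apply Finset.sum_congr rfl
        intro k _
        rw [transpose_apply, sq]
      rw [this]
      exact Finset.sum_nonneg fun k _ => sq_nonneg _
    have hPimtr : (D * Pim).trace = ∑ j, lam j * t j := by
      rw [hD, aux_trace_diag_mul]
      exact Finset.sum_congr rfl fun j _ => by rw [hPimdiag j]
    rw [hErrGen P, ← hQdef, ← hMdef, hdecomp, Matrix.mul_add, Matrix.trace_add, hPimtr]
    have := aux_rearr hr lam hdec hnonneg t ht0 ht1 htsum
    linarith
  · -- attained
    intro Pr
    set e : Fin d → ℝ := fun i => if (i : ℕ) < r then 1 else 0 with he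
    set E : Matrix (Fin d) (Fin d) ℝ := diagonal e with hE
    have hPrdef : Pr = V * E * W := by
      show (∑ i ∈ Finset.univ.filter (fun i : Fin d => (i : ℕ) < r),
        vecMulVec (v i) (v i)) * Γ = V * E * W
      have hS : (∑ i ∈ Finset.univ.filter (fun i : Fin d => (i : ℕ) < r),
          vecMulVec (v i) (v i)) = V * E * Vᵀ := by
        ext a b
        rw [Matrix.mul_apply]
        have : ∀ i, (V * E) a i * Vᵀ i b = if (i : ℕ) < r then v i a * v i b else 0 := by
          intro i
          rw [hE, Matrix.mul_diagonal, he]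
          simp only [hV, Matrix.of_apply, transpose_apply]
          by_cases h : (i : ℕ) < r <;> simp [h]
        rw [Finset.sum_congr rfl (fun i _ => this i), ← Finset.sum_filter]
        simp [Matrix.sum_apply, vecMulVec_apply]
      rw [hS, hW]
      simp only [Matrix.mul_assoc]
    have hEE : E * E = E := by
      rw [hE, diagonal_mul_diagonal]
      refine congrArg Matrix.diagonal (funext fun i => ?_)
      show e i * e i = e i
      rw [he]
      by_cases h : (i : ℕ) < r <;> simp [h]
    have hPr2 : Pr * Pr = Pr := by
      rw [hPrdef]
      calc (V * E * W) * (V * E * W)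
          = V * E * (W * V) * E * W := by simp only [Matrix.mul_assoc]
        _ = V * (E * E) * W := by rw [hWV]; simp only [Matrix.mul_assoc, Matrix.mul_one]
        _ = V * E * W := by rw [hEE, Matrix.mul_assoc]
    refine ⟨hPr2, ?_, ?_, ?_⟩
    · -- rank
      rw [hPrdef, Matrix.mul_assoc, Matrix.rank_mul_eq_right_of_isUnit_det V _ hVdet,
        Matrix.rank_mul_eq_left_of_isUnit_det W E hWdet, hE, Matrix.rank_diagonal,
        Fintype.card_subtype]
      rw [show (Finset.univ.filter fun i : Fin d => e i ≠ 0) =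
        (Finset.univ.filter fun i : Fin d => (i : ℕ) < r) from
        Finset.filter_congr (fun i _ => by rw [he]; by_cases h : (i : ℕ) < r <;> simp [h])]
      exact aux_card_lt hr
    · -- Pythagoras
      intro x
      have hPrt : Prᵀ = Γ * V * E * Vᵀ := by
        rw [hPrdef]
        calc (V * E * W)ᵀ = Wᵀ * (V * E)ᵀ := transpose_mul _ _
          _ = Wᵀ * (Eᵀ * Vᵀ) := by rw [transpose_mul V E]
          _ = (Γ * V) * (E * Vᵀ) := by rw [hWt, hE, diagonal_transpose]
          _ = Γ * V * E * Vᵀ := by simp only [Matrix.mul_assoc]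
      have hPrtΓ : Prᵀ * Γ = Γ * Pr := by
        rw [hPrt, hPrdef, hW]
        simp only [Matrix.mul_assoc]
      have hPGP : Prᵀ * Γ * Pr = Γ * Pr := by
        rw [hPrtΓ, Matrix.mul_assoc, hPr2]
      have hquad : ∀ (A : Matrix (Fin d) (Fin d) ℝ) (y : Fin d → ℝ),
          (A.mulVec y) ⬝ᵥ Γ.mulVec (A.mulVec y) = y ⬝ᵥ ((Aᵀ * Γ * A).mulVec y) := by
        intro A y
        calc (A.mulVec y) ⬝ᵥ Γ.mulVec (A.mulVec y)
            = (y ᵥ* Aᵀ) ⬝ᵥ (Γ *ᵥ (A *ᵥ y)) := by rw [Matrix.vecMul_transpose]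
          _ = y ⬝ᵥ (Aᵀ *ᵥ (Γ *ᵥ (A *ᵥ y))) := (Matrix.dotProduct_mulVec _ _ _).symm
          _ = y ⬝ᵥ ((Aᵀ * Γ * A) *ᵥ y) := by rw [Matrix.mulVec_mulVec, Matrix.mulVec_mulVec]
      have hid : Prᵀ * Γ * Pr + (1 - Pr)ᵀ * Γ * (1 - Pr) = Γ := by
        have e1 : (1 - Pr)ᵀ * Γ * (1 - Pr) = Γ - Γ * Pr - (Prᵀ * Γ - Prᵀ * Γ * Pr) := by
          rw [transpose_sub, transpose_one, Matrix.sub_mul, Matrix.one_mul, Matrix.sub_mul,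
            Matrix.mul_sub, Matrix.mul_sub, Matrix.mul_one, Matrix.mul_one]
        rw [e1, hPGP, hPrtΓ]
        abel
      rw [hquad Pr x, hquad (1 - Pr) x, ← dotProduct_add, ← Matrix.add_mulVec, hid]
    · -- value of reconErr
      rw [hErrGen Pr]
      have h1Pr : 1 - Pr = V * ((1 - E) * W) := by
        rw [Matrix.sub_mul, Matrix.one_mul, Matrix.mul_sub, hVW, hPrdef, Matrix.mul_assoc]
      have hM2 : W * (1 - Pr) * V = 1 - E := by
        rw [h1Pr]
        calc W * (V * ((1 - E) * W)) * V
            = (W * V) * (1 - E) * (W * V) := by simp only [Matrix.mul_assoc]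
          _ = 1 - E := by rw [hWV]; simp
      rw [hM2]
      have h1Et : (1 - E)ᵀ = 1 - E := by
        rw [transpose_sub, transpose_one, hE, diagonal_transpose]
      have h1EE : (1 - E) * (1 - E) = 1 - E := by
        rw [Matrix.sub_mul, Matrix.mul_sub, Matrix.mul_sub, hEE]
        simp
      rw [h1Et, h1EE, hD, aux_trace_diag_mul]
      have : ∀ j : Fin d, lam j * (1 - E) j j = if r ≤ (j : ℕ) then lam j else 0 := by
        intro j
        rw [hE, he]
        by_cases h : (j : ℕ) < r
        · simp [Matrix.one_apply, diagonal_apply_eq, h, Nat.not_le.mpr h]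
        · simp [Matrix.one_apply, diagonal_apply_eq, h, Nat.le_of_not_lt h]
      rw [Finset.sum_congr rfl (fun j _ => this j), ← Finset.sum_filter]
end

section
/- Let μ be a probability distribution on ℝ^d, P_r ∈ ℝ^{d×d} a projector, and μ′ the distribution of the random vector P_r X + (I_d − P_r) Y where X, Y are independent with law μ. Then for any measurable f : ℝ^d → ℝ₊ with ∫ f dμ′ < ∞, the conditional expectation E_{μ′}(f | σ(P_r)) is given μ′-a.e. by the map x ↦ E( f(P_r x + (I_d − P_r) Y) ), where Y ∼ μ. -/
open MeasureTheory Matrix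

/-- **Conditional expectation under `μ'`.**
Let `μ'` be the law of `P_r X + (I − P_r) Y` where `X, Y` are independent with
law `μ`.  Then for any measurable `f : ℝ^d → ℝ₊` with `∫ f dμ' < ∞`,
`E_{μ'}(f | σ(P_r))(x) = E(f(P_r x + (I − P_r) Y))`, `μ'`-a.e. -/
theorem condexp_muPrime (d : ℕ) (μ : Measure (Fin d → ℝ)) [IsProbabilityMeasure μ]
    (P : Matrix (Fin d) (Fin d) ℝ) (hP : P * P = P)
    (μ' : Measure (Fin d → ℝ))
    (hμ' : μ' = Measure.map
      (fun p : (Fin d → ℝ) × (Fin d → ℝ) => P.mulVec p.1 + (1 - P).mulVec p.2)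
      (μ.prod μ))
    (f : (Fin d → ℝ) → ℝ) (hf : Measurable f) (hf0 : ∀ x, 0 ≤ f x)
    (hfInt : Integrable f μ') :
    MeasureTheory.condExp
        (MeasurableSpace.comap (fun x => P.mulVec x)
          (inferInstance : MeasurableSpace (Fin d → ℝ)))
        μ' f
      =ᵐ[μ'] fun x => ∫ y, f (P.mulVec x + (1 - P).mulVec y) ∂μ := by
  subst hμ'
  set π : (Fin d → ℝ) → (Fin d → ℝ) := fun x => P.mulVec x with hπ
  have hPm : Measurable π := by
    have := (LinearMap.continuous_of_finiteDimensional (P.mulVecLin)).measurable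
    exact this
  have hQm : Measurable (fun x : Fin d → ℝ => (1 - P).mulVec x) := by
    have := (LinearMap.continuous_of_finiteDimensional ((1 - P).mulVecLin)).measurable
    exact this
  set T : (Fin d → ℝ) × (Fin d → ℝ) → (Fin d → ℝ) :=
    fun p => P.mulVec p.1 + (1 - P).mulVec p.2 with hT
  have hTm : Measurable T := (hPm.comp measurable_fst).add (hQm.comp measurable_snd)
  set ν : Measure ((Fin d → ℝ) × (Fin d → ℝ)) := μ.prod μ with hν
  have hPT : ∀ p, π (T p) = π p.1 := by
    intro p
    simp only [hπ, hT, Matrix.mulVec_add, Matrix.mulVec_mulVec, mul_sub, mul_one, hP,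
      sub_self, Matrix.zero_mulVec, add_zero]
  set g : (Fin d → ℝ) → ℝ := fun x => ∫ y, f (P.mulVec x + (1 - P).mulVec y) ∂μ with hg
  have hgT : ∀ p, g (T p) = g p.1 := by
    intro p
    have := hPT p
    simp only [hπ] at this
    simp only [hg, this]
  have hgπ : ∀ x, g (π x) = g x := by
    intro x
    have : P.mulVec (π x) = P.mulVec x := by
      simp only [hπ, Matrix.mulVec_mulVec, hP]
    simp only [hg, this]
  haveI : IsProbabilityMeasure (Measure.map T ν) :=
    Measure.isProbabilityMeasure_map hTm.aemeasurable
  have hm : MeasurableSpace.comap π (inferInstance : MeasurableSpace (Fin d → ℝ)) ≤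
      (inferInstance : MeasurableSpace (Fin d → ℝ)) := hPm.comap_le
  -- strong measurability of g
  have hgsm : StronglyMeasurable g := by
    have huncurry : StronglyMeasurable
        (Function.uncurry fun x y => f (P.mulVec x + (1 - P).mulVec y)) :=
      (hf.comp hTm).stronglyMeasurable
    exact huncurry.integral_prod_right
  -- f ∘ T is integrable
  have hfT : Integrable (f ∘ T) ν :=
    (integrable_map_measure hf.aestronglyMeasurable hTm.aemeasurable).mp hfInt
  have hgInt : Integrable g μ := by
    have := hfT.integral_prod_left
    simpa [hT, Function.comp] using this
  have hmapfst : Measure.map Prod.fst ν = μ := by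
    rw [hν, Measure.map_fst_prod, measure_univ, one_smul]
  have hgfst : Integrable (fun p : (Fin d → ℝ) × (Fin d → ℝ) => g p.1) ν := by
    rw [← hmapfst] at hgInt
    exact
      (integrable_map_measure hgsm.aestronglyMeasurable measurable_fst.aemeasurable).mp hgInt
  have hgInt' : Integrable g (Measure.map T ν) := by
    rw [integrable_map_measure hgsm.aestronglyMeasurable hTm.aemeasurable]
    have : (g ∘ T) = (fun p : (Fin d → ℝ) × (Fin d → ℝ) => g p.1) := funext fun p => hgT p
    rw [this]; exact hgfst
  -- the set-integral equality
  have key : ∀ s : Set (Fin d → ℝ),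
      MeasurableSet[MeasurableSpace.comap π (inferInstance : MeasurableSpace (Fin d → ℝ))] s →
      ∫ x in s, g x ∂(Measure.map T ν) = ∫ x in s, f x ∂(Measure.map T ν) := by
    rintro s ⟨A, hA, rfl⟩
    have hsA : MeasurableSet (π ⁻¹' A) := hPm hA
    have hpre : T ⁻¹' (π ⁻¹' A) = Prod.fst ⁻¹' (π ⁻¹' A) := by
      ext p
      simp [Set.mem_preimage, hPT p]
    have hrestrict : ν.restrict (Prod.fst ⁻¹' (π ⁻¹' A)) =
        (μ.restrict (π ⁻¹' A)).prod μ := by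
      rw [← Set.prod_univ, hν, ← Measure.prod_restrict, Measure.restrict_univ]
    have hfTr : Integrable (fun p => f (T p)) ((μ.restrict (π ⁻¹' A)).prod μ) := by
      rw [← hrestrict]; exact hfT.restrict
    have hgr : Integrable (fun p : (Fin d → ℝ) × (Fin d → ℝ) => g p.1)
        ((μ.restrict (π ⁻¹' A)).prod μ) := by
      rw [← hrestrict]; exact hgfst.restrict
    rw [setIntegral_map hsA hf.aestronglyMeasurable hTm.aemeasurable,
        setIntegral_map hsA hgsm.aestronglyMeasurable hTm.aemeasurable]
    calc ∫ p in T ⁻¹' (π ⁻¹' A), g (T p) ∂ν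
        = ∫ p in Prod.fst ⁻¹' (π ⁻¹' A), g p.1 ∂ν := by
          rw [hpre]; exact setIntegral_congr_fun (measurable_fst hsA) (fun p _ => hgT p)
      _ = ∫ p, g p.1 ∂((μ.restrict (π ⁻¹' A)).prod μ) := by rw [hrestrict]
      _ = ∫ x in π ⁻¹' A, ∫ _y, g x ∂μ ∂μ := integral_prod _ hgr
      _ = ∫ x in π ⁻¹' A, g x ∂μ := by simp
      _ = ∫ x in π ⁻¹' A, ∫ y, f (T (x, y)) ∂μ ∂μ := rfl
      _ = ∫ p, f (T p) ∂((μ.restrict (π ⁻¹' A)).prod μ) := (integral_prod _ hfTr).symm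
      _ = ∫ p in T ⁻¹' (π ⁻¹' A), f (T p) ∂ν := by rw [hpre, hrestrict]
  -- assemble
  have hgm' : AEStronglyMeasurable[
      (MeasurableSpace.comap π (inferInstance : MeasurableSpace (Fin d → ℝ)))]
      g (Measure.map T ν) := by
    refine ⟨g ∘ π, ?_, ?_⟩
    · exact hgsm.comp_measurable (measurable_iff_comap_le.mpr le_rfl)
    · exact Filter.Eventually.of_forall fun x => (hgπ x).symm
  have := ae_eq_condExp_of_forall_setIntegral_eq hm hfInt
    (fun s _ _ => hgInt'.integrableOn)
    (fun s hs _ => key s hs) hgm'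
  exact this.symm
end

section
/- Let μ be a probability distribution and f₁, f₂ : ℝ^d → ℝ₊ measurable with Z₁ = ∫ f₁ dμ ∈ (0,∞) and Z₂ = ∫ f₂ dμ ∈ (0,∞), and let ν₁, ν₂ be the distributions with dν₁/dμ ∝ f₁ and dν₂/dμ ∝ f₂. Then D_KL(ν₁ ‖ ν₂) ≤ (Z₂/Z₁²) ∫ (f₁ − f₂)²/f₂ dμ. -/
open MeasureTheory
open scoped ENNReal

lemma abs_log_le (t : ℝ) (ht : 0 < t) : |Real.log t| ≤ t + t⁻¹ := by
  rcases le_or_gt 1 t with h | h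
  · rw [abs_of_nonneg (Real.log_nonneg h)]
    have h2 : (0:ℝ) < t⁻¹ := by positivity
    linarith [Real.log_le_sub_one_of_pos ht]
  · rw [abs_of_nonpos (Real.log_nonpos (le_of_lt ht) h.le)]
    have h2 : Real.log t⁻¹ ≤ t⁻¹ - 1 := Real.log_le_sub_one_of_pos (by positivity)
    rw [Real.log_inv] at h2
    linarith

/-- **KL bounded by a χ²-type quantity.**
If `dν₁/dμ ∝ f₁` and `dν₂/dμ ∝ f₂` with normalizing constants
`Z₁ = ∫ f₁ dμ ∈ (0,∞)` and `Z₂ = ∫ f₂ dμ ∈ (0,∞)`, then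
`D_KL(ν₁‖ν₂) ≤ (Z₂/Z₁²) ∫ (f₁−f₂)²/f₂ dμ`, where the integrand is `+∞`
wherever `f₂ = 0 < f₁` (the right-hand side is computed in `ℝ≥0∞`). -/
theorem kl_le_chiSq (d : ℕ) (μ : Measure (Fin d → ℝ)) [IsProbabilityMeasure μ]
    (f₁ f₂ : (Fin d → ℝ) → ℝ) (hf₁ : Measurable f₁) (hf₂ : Measurable f₂)
    (hf₁0 : ∀ x, 0 ≤ f₁ x) (hf₂0 : ∀ x, 0 ≤ f₂ x)
    (hZ₁ : 0 < ∫ x, f₁ x ∂μ) (hZ₂ : 0 < ∫ x, f₂ x ∂μ)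
    (hf₁Int : Integrable f₁ μ) (hf₂Int : Integrable f₂ μ) :
    klDiv (normWithDensity μ f₁) (normWithDensity μ f₂)
      ≤ (((ENNReal.ofReal ((∫ x, f₂ x ∂μ) / (∫ x, f₁ x ∂μ) ^ 2)) *
          ∫⁻ x, ENNReal.ofReal ((f₁ x - f₂ x) ^ 2) / ENNReal.ofReal (f₂ x) ∂μ
          : ℝ≥0∞) : EReal) := by
  set Z₁ := ∫ x, f₁ x ∂μ with hZ₁d
  set Z₂ := ∫ x, f₂ x ∂μ with hZ₂d
  set G : (Fin d → ℝ) → ℝ≥0∞ := fun x => ENNReal.ofReal (f₁ x) with hGd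
  set H : (Fin d → ℝ) → ℝ≥0∞ := fun x => ENNReal.ofReal (f₂ x) with hHd
  have hGm : Measurable G := ENNReal.measurable_ofReal.comp hf₁
  have hHm : Measurable H := ENNReal.measurable_ofReal.comp hf₂
  have hGt : ∀ x, G x ≠ ⊤ := fun x => ENNReal.ofReal_ne_top
  have hHt : ∀ x, H x ≠ ⊤ := fun x => ENNReal.ofReal_ne_top
  set a := ENNReal.ofReal Z₁ with had
  set b := ENNReal.ofReal Z₂ with hbd
  have ha0 : a ≠ 0 := by simp [had, ENNReal.ofReal_eq_zero]; linarith
  have hat : a ≠ ⊤ := ENNReal.ofReal_ne_top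
  have hb0 : b ≠ 0 := by simp [hbd, ENNReal.ofReal_eq_zero]; linarith
  have hbt : b ≠ ⊤ := ENNReal.ofReal_ne_top
  have hGa : ∫⁻ x, G x ∂μ = a :=
    (ofReal_integral_eq_lintegral_ofReal hf₁Int (.of_forall hf₁0)).symm
  have hHb : ∫⁻ x, H x ∂μ = b :=
    (ofReal_integral_eq_lintegral_ofReal hf₂Int (.of_forall hf₂0)).symm
  have hν₁ : normWithDensity μ f₁ = μ.withDensity (fun x => a⁻¹ * G x) := by
    rw [normWithDensity]
    rw [show (fun x => a⁻¹ * G x) = a⁻¹ • G from rfl,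
      withDensity_smul' _ _ (by simp [ha0])]
  have hν₂ : normWithDensity μ f₂ = μ.withDensity (fun x => b⁻¹ * H x) := by
    rw [normWithDensity]
    rw [show (fun x => b⁻¹ * H x) = b⁻¹ • H from rfl,
      withDensity_smul' _ _ (by simp [hb0])]
  set ν₁ := normWithDensity μ f₁
  set ν₂ := normWithDensity μ f₂
  have hν₁prob : IsProbabilityMeasure ν₁ := by
    constructor
    rw [hν₁, withDensity_apply _ MeasurableSet.univ, setLIntegral_univ,
      lintegral_const_mul _ hGm, hGa, ENNReal.inv_mul_cancel ha0 hat]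
  have hν₂prob : IsProbabilityMeasure ν₂ := by
    constructor
    rw [hν₂, withDensity_apply _ MeasurableSet.univ, setLIntegral_univ,
      lintegral_const_mul _ hHm, hHb, ENNReal.inv_mul_cancel hb0 hbt]
  set φ : (Fin d → ℝ) → ℝ≥0∞ := fun x => ENNReal.ofReal ((f₁ x - f₂ x) ^ 2) / H x with hφd
  have hφm : Measurable φ :=
    (ENNReal.measurable_ofReal.comp ((hf₁.sub hf₂).pow_const 2)).div hHm
  set I := ∫⁻ x, φ x ∂μ with hId
  by_cases hI : I = ⊤
  · rw [hI, ENNReal.mul_top (by simp [ENNReal.ofReal_eq_zero]; positivity)]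
    rw [EReal.coe_ennreal_top]
    exact le_top
  -- main case
  have haeφ : ∀ᵐ x ∂μ, φ x ≠ ⊤ := ae_lt_top hφm hI |>.mono fun x hx => hx.ne
  have hae : ∀ᵐ x ∂μ, H x = 0 → G x = 0 := by
    filter_upwards [haeφ] with x hx h0
    by_contra hG
    apply hx
    have h1 : f₂ x = 0 := by
      have := ENNReal.ofReal_eq_zero.mp h0
      linarith [hf₂0 x]
    have h2 : 0 < f₁ x := by
      rcases lt_or_eq_of_le (hf₁0 x) with h | h
      · exact h
      · exact absurd (by simp [hGd, ← h]) hG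
    have : ENNReal.ofReal ((f₁ x - f₂ x) ^ 2) ≠ 0 := by
      refine (ENNReal.ofReal_pos.mpr ?_).ne'
      rw [h1, sub_zero]; exact pow_pos h2 2
    simp [hφd, h0, ENNReal.div_zero this]
  -- absolute continuity
  have hacGH : μ.withDensity G ≪ μ.withDensity H := by
    have heq : G =ᵐ[μ] fun x => H x * (G x / H x) := by
      filter_upwards [hae] with x hx
      rcases eq_or_ne (H x) 0 with h | h
      · simp [h, hx h]
      · rw [ENNReal.mul_div_cancel h (hHt x)]
    calc μ.withDensity G = μ.withDensity (fun x => H x * (G x / H x)) :=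
          withDensity_congr_ae heq
      _ = (μ.withDensity H).withDensity (fun x => G x / H x) :=
          withDensity_mul μ hHm (hGm.div hHm)
      _ ≪ μ.withDensity H := withDensity_absolutelyContinuous _ _
  have hac : ν₁ ≪ ν₂ := by
    intro s hs
    have h3 : b⁻¹ * (μ.withDensity H) s = 0 := hs
    have h2 : (μ.withDensity H) s = 0 := by
      rcases mul_eq_zero.mp h3 with h | h
      · exact absurd (ENNReal.inv_eq_zero.mp h) hbt
      · exact h
    have h4 : (μ.withDensity G) s = 0 := hacGH h2
    show a⁻¹ * (μ.withDensity G) s = 0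
    rw [h4, mul_zero]
  -- the density of ν₁ with respect to ν₂
  set K : (Fin d → ℝ) → ℝ≥0∞ := fun x => (b * a⁻¹) * (G x / H x) with hKd
  have hKm : Measurable K := (hGm.div hHm).const_mul _
  have hν₁K : ν₂.withDensity K = ν₁ := by
    rw [hν₂, ← withDensity_mul μ (hHm.const_mul b⁻¹) hKm, hν₁]
    apply withDensity_congr_ae
    filter_upwards [hae] with x hx
    show (b⁻¹ * H x) * K x = a⁻¹ * G x
    rcases eq_or_ne (H x) 0 with h | h
    · simp [h, hx h]
    · have hc : H x * (G x / H x) = G x := ENNReal.mul_div_cancel h (hHt x)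
      calc (b⁻¹ * H x) * ((b * a⁻¹) * (G x / H x))
          = (b⁻¹ * b) * (a⁻¹ * (H x * (G x / H x))) := by ring
        _ = a⁻¹ * G x := by rw [ENNReal.inv_mul_cancel hb0 hbt, hc, one_mul]
  have hRK₂ : ν₁.rnDeriv ν₂ =ᵐ[ν₂] K := by
    rw [← hν₁K]; exact Measure.rnDeriv_withDensity ν₂ hKm
  have hRK₁ : ν₁.rnDeriv ν₂ =ᵐ[ν₁] K := hac.ae_eq hRK₂
  -- a.e. positivity facts
  have hν₁ae : ∀ᵐ x ∂ν₁, 0 < f₁ x ∧ 0 < f₂ x := by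
    rw [hν₁, ae_withDensity_iff (hGm.const_mul a⁻¹)]
    filter_upwards [hae] with x hx h0
    have hG0 : G x ≠ 0 := fun h => h0 (by simp [h])
    have h1 : 0 < f₁ x := by
      rcases lt_or_eq_of_le (hf₁0 x) with h | h
      · exact h
      · exact absurd (by simp [hGd, ← h]) hG0
    have hH0 : H x ≠ 0 := fun h => hG0 (hx h)
    have h2 : 0 < f₂ x := by
      rcases lt_or_eq_of_le (hf₂0 x) with h | h
      · exact h
      · exact absurd (by simp [hHd, ← h]) hH0
    exact ⟨h1, h2⟩
  have hKpos : ∀ᵐ x ∂ν₁, 0 < K x ∧ K x ≠ ⊤ := by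
    filter_upwards [hν₁ae] with x hx
    have hG0 : G x ≠ 0 := by
      simp only [hGd, ne_eq, ENNReal.ofReal_eq_zero, not_le]; exact hx.1
    have hH0 : H x ≠ 0 := by
      simp only [hHd, ne_eq, ENNReal.ofReal_eq_zero, not_le]; exact hx.2
    constructor
    · exact ENNReal.mul_pos (by simp [hb0, hat]) (ENNReal.div_pos hG0 (hHt x)).ne'
    · exact ENNReal.mul_ne_top (ENNReal.mul_ne_top hbt (by simp [ha0]))
        (ENNReal.div_lt_top (hGt x) hH0).ne
  -- key lintegral computations
  set J := ∫⁻ x, G x * G x / H x ∂μ with hJd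
  have hKint : ∫⁻ x, K x ∂ν₁ = (b * a⁻¹ * a⁻¹) * J := by
    rw [hν₁, lintegral_withDensity_eq_lintegral_mul μ (hGm.const_mul a⁻¹) hKm, hJd,
      ← lintegral_const_mul' _ _ (ENNReal.mul_ne_top (ENNReal.mul_ne_top hbt (by simp [ha0]))
        (by simp [ha0]))]
    apply lintegral_congr fun x => ?_
    show (a⁻¹ * G x) * K x = (b * a⁻¹ * a⁻¹) * (G x * G x / H x)
    simp only [hKd, div_eq_mul_inv]
    ring
  have hJt : J ≠ ⊤ := by
    have hb2 : ∀ x, G x * G x / H x ≤ 2 * φ x + 2 * H x := by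
      intro x
      have h1 : G x * G x = ENNReal.ofReal (f₁ x ^ 2) := by
        rw [sq, ENNReal.ofReal_mul (hf₁0 x)]
      have h2 : H x * H x = ENNReal.ofReal (f₂ x ^ 2) := by
        rw [sq, ENNReal.ofReal_mul (hf₂0 x)]
      have h3 : f₁ x ^ 2 ≤ 2 * (f₁ x - f₂ x) ^ 2 + 2 * f₂ x ^ 2 := by nlinarith [sq_nonneg (f₁ x - 2 * f₂ x)]
      have h4 : G x * G x ≤ 2 * ENNReal.ofReal ((f₁ x - f₂ x) ^ 2) + 2 * (H x * H x) := by
        rw [h1, h2]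
        calc ENNReal.ofReal (f₁ x ^ 2) ≤ ENNReal.ofReal (2 * (f₁ x - f₂ x) ^ 2 + 2 * f₂ x ^ 2) :=
              ENNReal.ofReal_le_ofReal h3
          _ = 2 * ENNReal.ofReal ((f₁ x - f₂ x) ^ 2) + 2 * ENNReal.ofReal (f₂ x ^ 2) := by
              rw [ENNReal.ofReal_add (by positivity) (by positivity),
                ENNReal.ofReal_mul (by norm_num), ENNReal.ofReal_mul (by norm_num)]
              norm_num
      calc G x * G x / H x ≤ (2 * ENNReal.ofReal ((f₁ x - f₂ x) ^ 2) + 2 * (H x * H x)) / H x :=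
            ENNReal.div_le_div_right h4 _
        _ = 2 * φ x + 2 * (H x * H x / H x) := by
            rw [ENNReal.add_div, hφd]
            simp only [mul_div_assoc]
        _ ≤ 2 * φ x + 2 * H x := by
            gcongr
            rw [mul_div_assoc]
            exact mul_le_of_le_one_right (by positivity) ENNReal.div_self_le_one
    have : J ≤ 2 * I + 2 * b := by
      rw [hJd]
      calc ∫⁻ x, G x * G x / H x ∂μ ≤ ∫⁻ x, (2 * φ x + 2 * H x) ∂μ := lintegral_mono hb2
        _ = 2 * I + 2 * b := by
            rw [lintegral_add_left (hφm.const_mul 2), lintegral_const_mul 2 hφm,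
              lintegral_const_mul 2 hHm, hHb, hId]
    intro h
    rw [h] at this
    exact absurd (top_le_iff.mp this)
      (by simp [ENNReal.mul_eq_top, hI, hbt])
  have hIJ : I + 2 * a = J + b := by
    rw [hId, hJd, ← hGa, ← hHb, ← lintegral_const_mul 2 hGm, ← lintegral_add_left hφm,
      ← lintegral_add_left (f := fun x => G x * G x / H x) ((hGm.mul hGm).div hHm)]
    apply lintegral_congr_ae
    filter_upwards [hae] with x hx
    show φ x + 2 * G x = G x * G x / H x + H x
    rcases eq_or_ne (H x) 0 with h | h
    · have hG0 : G x = 0 := hx h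
      have hf₂x : f₂ x = 0 := le_antisymm (by simpa [hHd, ENNReal.ofReal_eq_zero] using h) (hf₂0 x)
      have hf₁x : f₁ x = 0 := le_antisymm (by simpa [hGd, ENNReal.ofReal_eq_zero] using hG0) (hf₁0 x)
      simp [hφd, h, hG0, hf₁x, hf₂x]
    · have h1 : ENNReal.ofReal (2 * (f₁ x * f₂ x)) = 2 * (G x * H x) := by
        rw [ENNReal.ofReal_mul (by norm_num), ENNReal.ofReal_mul (hf₁0 x)]
        norm_num
        rfl
      have h2 : (f₁ x - f₂ x) ^ 2 + 2 * (f₁ x * f₂ x) = f₁ x ^ 2 + f₂ x ^ 2 := by ring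
      have hnum : ENNReal.ofReal ((f₁ x - f₂ x) ^ 2) + 2 * (G x * H x)
          = G x * G x + H x * H x := by
        have hGG : G x * G x = ENNReal.ofReal (f₁ x ^ 2) := by
          show ENNReal.ofReal (f₁ x) * ENNReal.ofReal (f₁ x) = _
          rw [sq, ENNReal.ofReal_mul (hf₁0 x)]
        have hHH : H x * H x = ENNReal.ofReal (f₂ x ^ 2) := by
          show ENNReal.ofReal (f₂ x) * ENNReal.ofReal (f₂ x) = _
          rw [sq, ENNReal.ofReal_mul (hf₂0 x)]
        rw [← h1, hGG, hHH,
          ← ENNReal.ofReal_add (by positivity)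
            (mul_nonneg (by norm_num) (mul_nonneg (hf₁0 x) (hf₂0 x))),
          ← ENNReal.ofReal_add (by positivity) (by positivity)]
        exact congrArg ENNReal.ofReal (by ring)
      have h3 : φ x + 2 * (G x * H x) / H x = (G x * G x + H x * H x) / H x := by
        rw [hφd]
        show ENNReal.ofReal ((f₁ x - f₂ x) ^ 2) / H x + 2 * (G x * H x) / H x = _
        rw [← ENNReal.add_div, hnum]
      have h4 : 2 * (G x * H x) / H x = 2 * G x := by
        rw [mul_div_assoc, mul_div_assoc, ENNReal.div_self h (hHt x), mul_one]
      have h5 : H x * H x / H x = H x := by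
        rw [mul_div_assoc, ENNReal.div_self h (hHt x), mul_one]
      calc φ x + 2 * G x = φ x + 2 * (G x * H x) / H x := by rw [h4]
        _ = (G x * G x + H x * H x) / H x := h3
        _ = G x * G x / H x + H x := by rw [ENNReal.add_div, h5]
  have haR : a.toReal = Z₁ := ENNReal.toReal_ofReal hZ₁.le
  have hbR : b.toReal = Z₂ := ENNReal.toReal_ofReal hZ₂.le
  have hIJr : I.toReal + 2 * Z₁ = J.toReal + Z₂ := by
    have := congrArg ENNReal.toReal hIJ
    rwa [ENNReal.toReal_add hI (ENNReal.mul_ne_top ENNReal.ofNat_ne_top hat), ENNReal.toReal_add hJt hbt,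
      ENNReal.toReal_mul, ENNReal.toReal_ofNat, haR, hbR] at this
  have hcat : b * a⁻¹ * a⁻¹ ≠ ⊤ :=
    ENNReal.mul_ne_top (ENNReal.mul_ne_top hbt (by simp [ha0])) (by simp [ha0])
  have hKνt : ∫⁻ x, K x ∂ν₁ ≠ ⊤ := by
    rw [hKint]; exact ENNReal.mul_ne_top hcat hJt
  have hKinv : ∫⁻ x, (K x)⁻¹ ∂ν₁ ≤ 1 := by
    rw [hν₁, lintegral_withDensity_eq_lintegral_mul μ (hGm.const_mul a⁻¹) (g := fun x => (K x)⁻¹) hKm.inv]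
    have hb2 : ∀ᵐ x ∂μ, (fun x => a⁻¹ * G x) x * (fun x => (K x)⁻¹) x ≤ b⁻¹ * H x := by
      filter_upwards [hae] with x hx
      show a⁻¹ * G x * (K x)⁻¹ ≤ b⁻¹ * H x
      rcases eq_or_ne (G x) 0 with h | h
      · simp [h]
      · have hH0 : H x ≠ 0 := fun h0 => h (hx h0)
        have hKx : (K x)⁻¹ = b⁻¹ * a * (H x / G x) := by
          rw [hKd]
          show ((b * a⁻¹) * (G x / H x))⁻¹ = _
          rw [ENNReal.mul_inv (Or.inl (mul_ne_zero hb0 (by simp [hat])))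
              (Or.inl (ENNReal.mul_ne_top hbt (by simp [ha0]))),
            ENNReal.mul_inv (Or.inl hb0) (Or.inl hbt), inv_inv,
            ENNReal.inv_div (Or.inr (hGt x)) (Or.inr h)]
        rw [hKx]
        have : a⁻¹ * G x * (b⁻¹ * a * (H x / G x)) = b⁻¹ * H x * (a⁻¹ * a) * (G x * (G x)⁻¹) := by
          simp only [div_eq_mul_inv]; ring
        rw [this, ENNReal.inv_mul_cancel ha0 hat, ENNReal.mul_inv_cancel h (hGt x), mul_one,
          mul_one]
    calc ∫⁻ x, (fun x => a⁻¹ * G x) x * (fun x => (K x)⁻¹) x ∂μ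
        ≤ ∫⁻ x, b⁻¹ * H x ∂μ := lintegral_mono_ae hb2
      _ = 1 := by rw [lintegral_const_mul _ hHm, hHb, ENNReal.inv_mul_cancel hb0 hbt]
  -- integrability of the log term
  have hmlog : Measurable fun x => Real.log ((ν₁.rnDeriv ν₂ x).toReal) :=
    Real.measurable_log.comp (Measure.measurable_rnDeriv ν₁ ν₂).ennreal_toReal
  have hlogbound : ∀ᵐ x ∂ν₁,
      (‖Real.log ((ν₁.rnDeriv ν₂ x).toReal)‖₊ : ℝ≥0∞) ≤ K x + (K x)⁻¹ := by
    filter_upwards [hRK₁, hKpos] with x h1 h2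
    have ht : 0 < (K x).toReal := ENNReal.toReal_pos h2.1.ne' h2.2
    rw [h1, ← enorm_eq_nnnorm, Real.enorm_eq_ofReal_abs]
    calc ENNReal.ofReal |Real.log ((K x).toReal)|
        ≤ ENNReal.ofReal ((K x).toReal + (K x).toReal⁻¹) :=
          ENNReal.ofReal_le_ofReal (abs_log_le _ ht)
      _ = K x + (K x)⁻¹ := by
          rw [ENNReal.ofReal_add ht.le (by positivity), ENNReal.ofReal_toReal h2.2,
            ENNReal.ofReal_inv_of_pos ht, ENNReal.ofReal_toReal h2.2]
  have hlogint : Integrable (fun x => Real.log ((ν₁.rnDeriv ν₂ x).toReal)) ν₁ := by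
    refine ⟨hmlog.aestronglyMeasurable, ?_⟩
    rw [hasFiniteIntegral_def]
    calc ∫⁻ x, (‖Real.log ((ν₁.rnDeriv ν₂ x).toReal)‖₊ : ℝ≥0∞) ∂ν₁
        ≤ ∫⁻ x, (K x + (K x)⁻¹) ∂ν₁ := lintegral_mono_ae hlogbound
      _ = ∫⁻ x, K x ∂ν₁ + ∫⁻ x, (K x)⁻¹ ∂ν₁ := lintegral_add_left hKm _
      _ < ⊤ := ENNReal.add_lt_top.mpr ⟨hKνt.lt_top, lt_of_le_of_lt hKinv (by norm_num)⟩
  -- integrability and value of the density term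
  have hRint : Integrable (fun x => (ν₁.rnDeriv ν₂ x).toReal) ν₁ := by
    refine ⟨(Measure.measurable_rnDeriv ν₁ ν₂).ennreal_toReal.aestronglyMeasurable, ?_⟩
    rw [hasFiniteIntegral_def]
    calc ∫⁻ x, (‖(ν₁.rnDeriv ν₂ x).toReal‖₊ : ℝ≥0∞) ∂ν₁
        ≤ ∫⁻ x, ν₁.rnDeriv ν₂ x ∂ν₁ := by
          apply lintegral_mono fun x => ?_
          rw [← enorm_eq_nnnorm, Real.enorm_eq_ofReal_abs, abs_of_nonneg ENNReal.toReal_nonneg]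
          exact ENNReal.ofReal_toReal_le
      _ = ∫⁻ x, K x ∂ν₁ := lintegral_congr_ae hRK₁
      _ < ⊤ := hKνt.lt_top
  have hRval : ∫ x, (ν₁.rnDeriv ν₂ x).toReal ∂ν₁ = ((b * a⁻¹ * a⁻¹) * J).toReal := by
    rw [integral_eq_lintegral_of_nonneg_ae (Filter.Eventually.of_forall fun x => ENNReal.toReal_nonneg)
      (Measure.measurable_rnDeriv ν₁ ν₂).ennreal_toReal.aestronglyMeasurable, ← hKint]
    congr 1
    apply lintegral_congr_ae
    filter_upwards [hRK₁, hKpos] with x h1 h2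
    rw [h1, ENNReal.ofReal_toReal h2.2]
  have hlogle : ∫ x, Real.log ((ν₁.rnDeriv ν₂ x).toReal) ∂ν₁ ≤ ((b * a⁻¹ * a⁻¹) * J).toReal - 1 := by
    have h1 : ∫ x, Real.log ((ν₁.rnDeriv ν₂ x).toReal) ∂ν₁
        ≤ ∫ x, ((ν₁.rnDeriv ν₂ x).toReal - 1) ∂ν₁ := by
      apply integral_mono_ae hlogint (hRint.sub (integrable_const 1))
      filter_upwards [hRK₁, hKpos] with x h1 h2
      have : 0 < (ν₁.rnDeriv ν₂ x).toReal := by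
        rw [h1]; exact ENNReal.toReal_pos h2.1.ne' h2.2
      exact Real.log_le_sub_one_of_pos this
    rwa [integral_sub hRint (integrable_const 1), integral_const, probReal_univ,
      one_smul, hRval] at h1
  -- final computation
  have hWt : ENNReal.ofReal (Z₂ / Z₁ ^ 2) * I ≠ ⊤ :=
    ENNReal.mul_ne_top ENNReal.ofReal_ne_top hI
  have hcR : (b * a⁻¹ * a⁻¹).toReal = Z₂ / Z₁ ^ 2 := by
    rw [ENNReal.toReal_mul, ENNReal.toReal_mul, ENNReal.toReal_inv, haR, hbR, sq,
      div_eq_mul_inv, mul_inv]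
    ring
  have hfinal : ∫ x, Real.log ((ν₁.rnDeriv ν₂ x).toReal) ∂ν₁
      ≤ (ENNReal.ofReal (Z₂ / Z₁ ^ 2) * I).toReal := by
    have hWr : (ENNReal.ofReal (Z₂ / Z₁ ^ 2) * I).toReal = Z₂ / Z₁ ^ 2 * I.toReal := by
      rw [ENNReal.toReal_mul, ENNReal.toReal_ofReal (by positivity)]
    rw [hWr]
    have hJr : ((b * a⁻¹ * a⁻¹) * J).toReal = Z₂ / Z₁ ^ 2 * J.toReal := by
      rw [ENNReal.toReal_mul, hcR]
    have hIr : I.toReal = J.toReal + Z₂ - 2 * Z₁ := by linarith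
    have hZ₁2 : (0:ℝ) < Z₁ ^ 2 := by positivity
    have hcc : Z₂ / Z₁ ^ 2 * Z₁ ^ 2 = Z₂ := div_mul_cancel₀ _ hZ₁2.ne'
    have hccn : 0 ≤ Z₂ / Z₁ ^ 2 := by positivity
    rw [hIr]
    have := hlogle
    rw [hJr] at this
    nlinarith [sq_nonneg (Z₂ - Z₁)]
  -- conclude
  show klDiv ν₁ ν₂ ≤ ((ENNReal.ofReal (Z₂ / Z₁ ^ 2) * I : ℝ≥0∞) : EReal)
  rw [klDiv, if_pos ⟨hac, hlogint⟩]
  have hcoe : ((ENNReal.ofReal (Z₂ / Z₁ ^ 2) * I : ℝ≥0∞) : EReal)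
      = (((ENNReal.ofReal (Z₂ / Z₁ ^ 2) * I).toReal : ℝ) : EReal) := by
    conv_lhs => rw [← ENNReal.ofReal_toReal hWt]
    rw [EReal.coe_ennreal_ofReal, max_eq_left ENNReal.toReal_nonneg]
  rw [hcoe]
  exact_mod_cast EReal.coe_le_coe_iff.mpr hfinal
end

section
/- Assume ρ(x) = exp(−½‖x−m‖²_Γ − Ψ(x)) with Ψ bounded satisfying exp(sup Ψ − inf Ψ) ≤ κ, Γ symmetric positive definite, m ∈ ℝ^d. Let P_r be a ‖·‖_Γ-orthogonal rank-r projector, U_r ∈ ℝ^{d×r} and U_⊥ ∈ ℝ^{d×(d−r)} matrices whose columns form bases of Im(P_r) and Ker(P_r). With C = ∫∫ ρ(U_r ξ_r′ + U_⊥ ξ_⊥′) dξ_r′ dξ_⊥′, define marginals p_⊥(ξ_⊥) = C⁻¹ ∫ ρ(U_r ξ_r′ + U_⊥ ξ_⊥) dξ_r′ and p_r(ξ_r) = C⁻¹ ∫ ρ(U_r ξ_r + U_⊥ ξ_⊥′) dξ_⊥′. Then: (i) κ⁻² p_r(ξ_r) p_⊥(ξ_⊥) ≤ C⁻¹ ρ(U_r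 ξ_r + U_⊥ ξ_⊥) ≤ κ² p_r(ξ_r) p_⊥(ξ_⊥) for all ξ_r, ξ_⊥; (ii) for every x ∈ ℝ^d, the conditional density p_⊥(ξ_⊥|P_r x) = ρ(P_r x + U_⊥ ξ_⊥)/∫ρ(P_r x + U_⊥ ξ_⊥′)dξ_⊥′ satisfies κ⁻² p_⊥(ξ_⊥) ≤ p_⊥(ξ_⊥|P_r x) ≤ κ² p_⊥(ξ_⊥); and (iii) χ²( p_⊥(·|P_r x) ‖ p_⊥ ) ≤ κ² − 1. -/
open MeasureTheory Matrix
open scoped ENNReal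


lemma aux_posdef_bound {n : ℕ} (M : Matrix (Fin n) (Fin n) ℝ)
    (hM : ∀ v : Fin n → ℝ, v ≠ 0 → 0 < v ⬝ᵥ M.mulVec v) :
    ∃ ε > 0, ∀ v : Fin n → ℝ, ε * (∑ i, v i ^ 2) ≤ v ⬝ᵥ M.mulVec v := by
  rcases isEmpty_or_nonempty (Fin n) with h | h
  · refine ⟨1, one_pos, fun v => ?_⟩
    simp [dotProduct]
  · set s : (Fin n → ℝ) → ℝ := fun v => ∑ i, v i ^ 2 with hs
    have hscont : Continuous s := continuous_finset_sum _ fun i _ => (continuous_apply i).pow 2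
    have hqcont : Continuous fun v : Fin n → ℝ => v ⬝ᵥ M.mulVec v := by
      show Continuous fun v : Fin n → ℝ => ∑ i, v i * ∑ j, M i j * v j
      exact continuous_finset_sum _ fun i _ => (continuous_apply i).mul
        (continuous_finset_sum _ fun j _ => continuous_const.mul (continuous_apply j))
    have hKsub : s ⁻¹' {1} ⊆ Metric.closedBall 0 1 := by
      intro v hv
      simp only [Set.mem_preimage, Set.mem_singleton_iff] at hv
      rw [Metric.mem_closedBall, dist_zero_right]
      refine (pi_norm_le_iff_of_nonneg zero_le_one).2 fun i => ?_
      have h1 : v i ^ 2 ≤ 1 := by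
        rw [← hv]
        exact Finset.single_le_sum (f := fun i => v i ^ 2)
          (fun j _ => sq_nonneg _) (Finset.mem_univ i)
      rw [Real.norm_eq_abs]
      nlinarith [sq_abs (v i), abs_nonneg (v i)]
    have hKcl : IsClosed (s ⁻¹' {1}) := isClosed_singleton.preimage hscont
    have hK : IsCompact (s ⁻¹' {1}) :=
      (isCompact_closedBall (0 : Fin n → ℝ) 1).of_isClosed_subset hKcl hKsub
    have hne : (s ⁻¹' {1}).Nonempty := by
      refine ⟨Pi.single (Classical.arbitrary (Fin n)) 1, ?_⟩
      simp only [Set.mem_preimage, Set.mem_singleton_iff, hs]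
      rw [Finset.sum_eq_single (Classical.arbitrary (Fin n))]
      · simp
      · intro j _ hj; simp [Pi.single_apply, hj]
      · simp
    obtain ⟨v0, hv0K, hmin⟩ := hK.exists_isMinOn hne hqcont.continuousOn
    have hv0ne : v0 ≠ 0 := by
      intro h0
      simp only [Set.mem_preimage, Set.mem_singleton_iff, h0, hs] at hv0K
      simp at hv0K
    refine ⟨v0 ⬝ᵥ M.mulVec v0, hM v0 hv0ne, fun v => ?_⟩
    by_cases hv : v = 0
    · simp [hv, dotProduct]
    · have hsv : 0 < s v := by
        obtain ⟨i, hi⟩ := Function.ne_iff.1 hv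
        have : (0:ℝ) < v i ^ 2 := lt_of_le_of_ne (sq_nonneg _) (Ne.symm (pow_ne_zero 2 hi))
        exact lt_of_lt_of_le this (Finset.single_le_sum (f := fun i => v i ^ 2)
          (fun j _ => sq_nonneg _) (Finset.mem_univ i))
      set t : ℝ := Real.sqrt (s v) with htdef
      have ht : 0 < t := Real.sqrt_pos.2 hsv
      have ht2 : t ^ 2 = s v := Real.sq_sqrt hsv.le
      have hu : t⁻¹ • v ∈ s ⁻¹' {1} := by
        simp only [Set.mem_preimage, Set.mem_singleton_iff, hs, Pi.smul_apply, smul_eq_mul,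
          mul_pow, ← Finset.mul_sum]
        change t⁻¹ ^ 2 * s v = 1
        rw [← ht2]
        field_simp
      have h1 := hmin hu
      have hq : (t⁻¹ • v) ⬝ᵥ M.mulVec (t⁻¹ • v) = t⁻¹ ^ 2 * (v ⬝ᵥ M.mulVec v) := by
        rw [Matrix.mulVec_smul, smul_dotProduct, dotProduct_smul]
        simp [smul_eq_mul]; ring
      have h1' : v0 ⬝ᵥ M.mulVec v0 ≤ (t⁻¹ • v) ⬝ᵥ M.mulVec (t⁻¹ • v) := h1
      rw [hq] at h1'
      have h2 : (v0 ⬝ᵥ M.mulVec v0) * t ^ 2 ≤ t⁻¹ ^ 2 * (v ⬝ᵥ M.mulVec v) * t ^ 2 :=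
        mul_le_mul_of_nonneg_right h1' (sq_nonneg t)
      have h3 : t⁻¹ ^ 2 * (v ⬝ᵥ M.mulVec v) * t ^ 2 = v ⬝ᵥ M.mulVec v := by
        field_simp
      rw [h3, ht2] at h2
      simp only [hs] at h2
      linarith



lemma aux_integrable_gauss {d n : ℕ} (Γ : Matrix (Fin d) (Fin d) ℝ) (hΓ : Γ.PosDef)
    (A : Matrix (Fin d) (Fin n) ℝ) (hA : LinearIndependent ℝ (fun j => Aᵀ j)) (c : Fin d → ℝ) :
    Integrable (fun v : Fin n → ℝ =>
      Real.exp (-(1 / 2) * ((A.mulVec v - c) ⬝ᵥ Γ.mulVec (A.mulVec v - c)))) := by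
  -- symmetry of Γ
  have hΓt : Γᵀ = Γ := by
    have h := hΓ.1
    rw [Matrix.IsHermitian] at h
    ext i j
    rw [Matrix.transpose_apply]
    have h2 := congrFun (congrFun h i) j
    simp only [Matrix.conjTranspose_apply, star_trivial] at h2
    exact h2
  have hΓsym : ∀ x y : Fin d → ℝ, x ⬝ᵥ Γ.mulVec y = y ⬝ᵥ Γ.mulVec x := by
    intro x y
    rw [Matrix.dotProduct_mulVec, ← Matrix.mulVec_transpose, hΓt, dotProduct_comm]
  -- injectivity of mulVec
  have hrepr : ∀ v : Fin n → ℝ, A.mulVec v = ∑ j, v j • (Aᵀ j) := by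
    intro v
    funext i
    simp [Matrix.mulVec, dotProduct, Finset.sum_apply, Matrix.transpose_apply, mul_comm]
  have hAinj : ∀ v : Fin n → ℝ, A.mulVec v = 0 → v = 0 := by
    intro v hv
    rw [hrepr] at hv
    have := Fintype.linearIndependent_iff.mp hA v hv
    funext i; exact this i
  -- the matrix of the quadratic form
  set M : Matrix (Fin n) (Fin n) ℝ := Aᵀ * Γ * A with hM
  have hMq : ∀ v : Fin n → ℝ, v ⬝ᵥ M.mulVec v = (A.mulVec v) ⬝ᵥ Γ.mulVec (A.mulVec v) := by
    intro v
    calc v ⬝ᵥ M.mulVec v = v ⬝ᵥ Aᵀ.mulVec ((Γ * A).mulVec v) := by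
          rw [Matrix.mulVec_mulVec, hM, Matrix.mul_assoc]
      _ = (A.mulVec v) ⬝ᵥ ((Γ * A).mulVec v) := by
          rw [Matrix.dotProduct_mulVec, Matrix.vecMul_transpose]
      _ = (A.mulVec v) ⬝ᵥ Γ.mulVec (A.mulVec v) := by rw [← Matrix.mulVec_mulVec]
  have hMpos : ∀ v : Fin n → ℝ, v ≠ 0 → 0 < v ⬝ᵥ M.mulVec v := by
    intro v hv
    rw [hMq]
    have hAv : A.mulVec v ≠ 0 := fun h => hv (hAinj v h)
    have := hΓ.dotProduct_mulVec_pos hAv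
    simpa using this
  obtain ⟨ε, hε, hεle⟩ := aux_posdef_bound M hMpos
  -- linear part
  set w : Fin n → ℝ := Aᵀ.mulVec (Γ.mulVec c) with hw
  have hlin : ∀ v : Fin n → ℝ, (A.mulVec v) ⬝ᵥ Γ.mulVec c = v ⬝ᵥ w := by
    intro v
    rw [hw, Matrix.dotProduct_mulVec v, Matrix.vecMul_transpose]
  have hexp : ∀ v : Fin n → ℝ, (A.mulVec v - c) ⬝ᵥ Γ.mulVec (A.mulVec v - c)
      = v ⬝ᵥ M.mulVec v - 2 * (v ⬝ᵥ w) + c ⬝ᵥ Γ.mulVec c := by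
    intro v
    rw [Matrix.mulVec_sub, sub_dotProduct, dotProduct_sub,
      dotProduct_sub, hMq]
    have h1 : c ⬝ᵥ Γ.mulVec (A.mulVec v) = (A.mulVec v) ⬝ᵥ Γ.mulVec c := hΓsym c _
    rw [h1, hlin]
    ring
  -- lower bound on the quadratic
  set β : ℝ := (2 / ε) * (∑ i, w i ^ 2) + |c ⬝ᵥ Γ.mulVec c| with hβ
  have hlb : ∀ v : Fin n → ℝ, ε / 2 * (∑ i, v i ^ 2) - β
      ≤ (A.mulVec v - c) ⬝ᵥ Γ.mulVec (A.mulVec v - c) := by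
    intro v
    rw [hexp]
    have h1 : ε * (∑ i, v i ^ 2) ≤ v ⬝ᵥ M.mulVec v := hεle v
    have h2 : 2 * (v ⬝ᵥ w) ≤ ε / 2 * (∑ i, v i ^ 2) + (2 / ε) * (∑ i, w i ^ 2) := by
      have hpt : ∀ i : Fin n, 2 * (v i * w i) ≤ ε / 2 * v i ^ 2 + 2 / ε * w i ^ 2 := by
        intro i
        have h' : ε / 2 * (ε / 2 * v i ^ 2 - 2 * (v i * w i) + 2 / ε * w i ^ 2) ≥ 0 := by
          have : ε / 2 * (ε / 2 * v i ^ 2 - 2 * (v i * w i) + 2 / ε * w i ^ 2)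
              = (ε / 2 * v i - w i) ^ 2 := by field_simp; ring
          rw [this]; exact sq_nonneg _
        nlinarith [h']
      show 2 * ∑ i, v i * w i ≤ _
      calc 2 * ∑ i, v i * w i = ∑ i, 2 * (v i * w i) := by rw [Finset.mul_sum]
        _ ≤ ∑ i, (ε / 2 * v i ^ 2 + 2 / ε * w i ^ 2) :=
            Finset.sum_le_sum fun i _ => hpt i
        _ = ε / 2 * (∑ i, v i ^ 2) + (2 / ε) * (∑ i, w i ^ 2) := by
            rw [Finset.sum_add_distrib, ← Finset.mul_sum, ← Finset.mul_sum]
    have h3 : -|c ⬝ᵥ Γ.mulVec c| ≤ c ⬝ᵥ Γ.mulVec c := neg_abs_le _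
    rw [hβ]
    linarith
  -- dominating function
  have hcont : Continuous fun v : Fin n → ℝ =>
      Real.exp (-(1 / 2) * ((A.mulVec v - c) ⬝ᵥ Γ.mulVec (A.mulVec v - c))) := by
    have hAc : Continuous fun v : Fin n → ℝ => A.mulVec v := by
      have := LinearMap.continuous_of_finiteDimensional (A.mulVecLin)
      simpa [Matrix.coe_mulVecLin] using this
    have hsub : Continuous fun v : Fin n → ℝ => A.mulVec v - c := hAc.sub continuous_const
    have hΓc : Continuous fun x : Fin d → ℝ => Γ.mulVec x := by
      have := LinearMap.continuous_of_finiteDimensional (Γ.mulVecLin)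
      simpa [Matrix.coe_mulVecLin] using this
    have hdot : Continuous fun p : (Fin d → ℝ) × (Fin d → ℝ) => p.1 ⬝ᵥ p.2 := by
      show Continuous fun p : (Fin d → ℝ) × (Fin d → ℝ) => ∑ i, p.1 i * p.2 i
      exact continuous_finset_sum _ fun i _ =>
        ((continuous_apply i).comp continuous_fst).mul ((continuous_apply i).comp continuous_snd)
    have : Continuous fun v : Fin n → ℝ => (A.mulVec v - c) ⬝ᵥ Γ.mulVec (A.mulVec v - c) :=
      hdot.comp (hsub.prodMk (hΓc.comp hsub))
    exact Real.continuous_exp.comp (continuous_const.mul this)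
  apply Integrable.mono'
    (g := fun v : Fin n → ℝ => Real.exp (β / 2) * ∏ i, Real.exp (-(ε / 4) * v i ^ 2))
  · refine Integrable.const_mul ?_ _
    refine Integrable.fintype_prod (f := fun (_ : Fin n) (x : ℝ) => Real.exp (-(ε / 4) * x ^ 2))
      fun i => ?_
    simpa using integrable_exp_neg_mul_sq (show (0:ℝ) < ε / 4 by linarith)
  · exact hcont.aestronglyMeasurable
  · refine Filter.Eventually.of_forall fun v => ?_
    rw [Real.norm_eq_abs, abs_of_pos (Real.exp_pos _)]
    rw [← Real.exp_sum, ← Real.exp_add]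
    apply Real.exp_le_exp.2
    have := hlb v
    have hsum : ∑ i, -(ε / 4) * v i ^ 2 = -(ε / 4) * ∑ i, v i ^ 2 := by
      rw [Finset.mul_sum]
    rw [hsum]
    nlinarith [this]

set_option maxHeartbeats 2000000 in
/-- **Product-like factorization of a bounded perturbation of a Gaussian.**
Let `ρ(x) = exp(−½‖x−m‖²_Γ − Ψ(x))` with `exp(sup Ψ − inf Ψ) ≤ κ`, let `P_r` be
a `‖·‖_Γ`-orthogonal rank-`r` projector and `U_r, U_⊥` matrices whose columns form
bases of `Im(P_r)` and `Ker(P_r)`.  With the marginals `p_⊥` and `p_r` of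
`C⁻¹ρ(U_r ξ_r + U_⊥ ξ_⊥)`: (i) `κ⁻² p_r p_⊥ ≤ C⁻¹ρ ≤ κ² p_r p_⊥`;
(ii) `κ⁻² p_⊥(ξ_⊥) ≤ p_⊥(ξ_⊥|P_r x) ≤ κ² p_⊥(ξ_⊥)` for every `x`; and
(iii) `χ²(p_⊥(·|P_r x) ‖ p_⊥) ≤ κ² − 1`. -/
theorem gaussian_perturbation_factorization (d r : ℕ) (hr : r ≤ d)
    (κ : ℝ) (hκ : 1 ≤ κ)
    (Γ : Matrix (Fin d) (Fin d) ℝ) (hΓ : Γ.PosDef) (mv : Fin d → ℝ)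
    (Ψ : (Fin d → ℝ) → ℝ) (hΨmeas : Measurable Ψ)
    (hΨ : ∀ x y, Real.exp (Ψ x - Ψ y) ≤ κ)
    (ρ : (Fin d → ℝ) → ℝ)
    (hρ : ∀ x, ρ x =
      Real.exp (-(1 / 2) * ((x - mv) ⬝ᵥ Γ.mulVec (x - mv)) - Ψ x))
    (P : Matrix (Fin d) (Fin d) ℝ) (hP : P * P = P) (hrank : P.rank = r)
    (hPorth : ∀ x : Fin d → ℝ, x ⬝ᵥ Γ.mulVec x =
      (P.mulVec x) ⬝ᵥ Γ.mulVec (P.mulVec x) +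
        ((1 - P).mulVec x) ⬝ᵥ Γ.mulVec ((1 - P).mulVec x))
    (Ur : Matrix (Fin d) (Fin r) ℝ) (Uperp : Matrix (Fin d) (Fin (d - r)) ℝ)
    (hUrli : LinearIndependent ℝ (fun j => Urᵀ j))
    (hUrspan : Submodule.span ℝ (Set.range fun j => Urᵀ j) = LinearMap.range P.mulVecLin)
    (hUperpli : LinearIndependent ℝ (fun j => Uperpᵀ j))
    (hUperpspan : Submodule.span ℝ (Set.range fun j => Uperpᵀ j)
      = LinearMap.ker P.mulVecLin) :
    let C : ℝ := ∫ ξr : Fin r → ℝ, ∫ ξp : Fin (d - r) → ℝ,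
      ρ (Ur.mulVec ξr + Uperp.mulVec ξp)
    let pperp : (Fin (d - r) → ℝ) → ℝ := fun ξp =>
      C⁻¹ * ∫ ξr : Fin r → ℝ, ρ (Ur.mulVec ξr + Uperp.mulVec ξp)
    let pr : (Fin r → ℝ) → ℝ := fun ξr =>
      C⁻¹ * ∫ ξp : Fin (d - r) → ℝ, ρ (Ur.mulVec ξr + Uperp.mulVec ξp)
    let pcond : (Fin d → ℝ) → (Fin (d - r) → ℝ) → ℝ := fun x ξp =>
      ρ (P.mulVec x + Uperp.mulVec ξp) /
        ∫ ξp' : Fin (d - r) → ℝ, ρ (P.mulVec x + Uperp.mulVec ξp')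
    (∀ (ξr : Fin r → ℝ) (ξp : Fin (d - r) → ℝ),
      κ⁻¹ ^ 2 * (pr ξr * pperp ξp) ≤ C⁻¹ * ρ (Ur.mulVec ξr + Uperp.mulVec ξp) ∧
        C⁻¹ * ρ (Ur.mulVec ξr + Uperp.mulVec ξp) ≤ κ ^ 2 * (pr ξr * pperp ξp)) ∧
    (∀ (x : Fin d → ℝ) (ξp : Fin (d - r) → ℝ),
      κ⁻¹ ^ 2 * pperp ξp ≤ pcond x ξp ∧ pcond x ξp ≤ κ ^ 2 * pperp ξp) ∧
    (∀ x : Fin d → ℝ,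
      (∫⁻ ξp : Fin (d - r) → ℝ,
          ENNReal.ofReal ((pcond x ξp - pperp ξp) ^ 2) / ENNReal.ofReal (pperp ξp))
        ≤ ENNReal.ofReal (κ ^ 2 - 1)) := by
  intro C pperp pr pcond
  have hκpos : (0:ℝ) < κ := lt_of_lt_of_le one_pos hκ
  have hκne : κ ≠ 0 := hκpos.ne'
  -- basic objects
  obtain ⟨Q, hQdef⟩ : ∃ Q : (Fin d → ℝ) → ℝ, Q = fun x => x ⬝ᵥ Γ.mulVec x := ⟨_, rfl⟩
  obtain ⟨a, hadef⟩ : ∃ a : Fin d → ℝ, a = P.mulVec mv := ⟨_, rfl⟩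
  obtain ⟨bb, hbdef⟩ : ∃ bb : Fin d → ℝ, bb = mv - a := ⟨_, rfl⟩
  obtain ⟨E, hEdef⟩ : ∃ E : (Fin d → ℝ) → ℝ, E = fun x => Real.exp (-Ψ x) := ⟨_, rfl⟩
  obtain ⟨fr, hfrdef⟩ : ∃ fr : (Fin r → ℝ) → ℝ, fr = fun ξr => Real.exp (-(1/2) * Q (Ur.mulVec ξr - a)) := ⟨_, rfl⟩
  obtain ⟨fp, hfpdef⟩ : ∃ fp : (Fin (d - r) → ℝ) → ℝ, fp = fun ξp => Real.exp (-(1/2) * Q (Uperp.mulVec ξp - bb)) := ⟨_, rfl⟩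
  have hEpos : ∀ x, 0 < E x := fun x => by rw [hEdef]; exact Real.exp_pos _
  have hfrpos : ∀ ξr, 0 < fr ξr := fun _ => by rw [hfrdef]; exact Real.exp_pos _
  have hfppos : ∀ ξp, 0 < fp ξp := fun _ => by rw [hfpdef]; exact Real.exp_pos _
  have hEκ : ∀ x y, E x ≤ κ * E y := by
    intro x y
    have h := hΨ y x
    calc E x = Real.exp (Ψ y - Ψ x) * E y := by
          rw [hEdef]; simp only []; rw [← Real.exp_add]; congr 1; ring
      _ ≤ κ * E y := mul_le_mul_of_nonneg_right h (hEpos y).le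
  -- projector facts
  have hPP : ∀ x, P.mulVec (P.mulVec x) = P.mulVec x := by
    intro x; rw [Matrix.mulVec_mulVec, hP]
  have hrepUr : ∀ ξr : Fin r → ℝ, Ur.mulVec ξr = ∑ j, ξr j • (Urᵀ j) := by
    intro ξr
    funext i
    simp [Matrix.mulVec, dotProduct, Finset.sum_apply, Matrix.transpose_apply, mul_comm]
  have hrepUp : ∀ ξp : Fin (d - r) → ℝ, Uperp.mulVec ξp = ∑ j, ξp j • (Uperpᵀ j) := by
    intro ξp
    funext i
    simp [Matrix.mulVec, dotProduct, Finset.sum_apply, Matrix.transpose_apply, mul_comm]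
  have hPUr : ∀ ξr, P.mulVec (Ur.mulVec ξr) = Ur.mulVec ξr := by
    intro ξr
    have hmem : Ur.mulVec ξr ∈ LinearMap.range P.mulVecLin := by
      rw [← hUrspan, hrepUr]
      exact Submodule.sum_mem _ fun j _ =>
        Submodule.smul_mem _ _ (Submodule.subset_span ⟨j, rfl⟩)
    obtain ⟨z, hz⟩ := hmem
    simp only [Matrix.mulVecLin_apply] at hz
    rw [← hz]
    exact hPP z
  have hPUp : ∀ ξp, P.mulVec (Uperp.mulVec ξp) = 0 := by
    intro ξp
    have hmem : Uperp.mulVec ξp ∈ LinearMap.ker P.mulVecLin := by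
      rw [← hUperpspan, hrepUp]
      exact Submodule.sum_mem _ fun j _ =>
        Submodule.smul_mem _ _ (Submodule.subset_span ⟨j, rfl⟩)
    have := LinearMap.mem_ker.mp hmem
    simpa [Matrix.mulVecLin_apply] using this
  -- factorization
  have hfact : ∀ u : Fin d → ℝ, P.mulVec u = u → ∀ ξp : Fin (d - r) → ℝ,
      ρ (u + Uperp.mulVec ξp) =
      Real.exp (-(1/2) * Q (u - a)) * (fp ξp * E (u + Uperp.mulVec ξp)) := by
    intro u hu ξp
    have h1 : P.mulVec (u + Uperp.mulVec ξp - mv) = u - a := by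
      rw [Matrix.mulVec_sub, Matrix.mulVec_add, hu, hPUp ξp, hadef, add_zero]
    have h2 : (1 - P).mulVec (u + Uperp.mulVec ξp - mv) = Uperp.mulVec ξp - bb := by
      rw [Matrix.sub_mulVec, Matrix.one_mulVec, h1, hbdef, hadef]
      abel
    have h3 := hPorth (u + Uperp.mulVec ξp - mv)
    rw [h1, h2] at h3
    have h4 : (u + Uperp.mulVec ξp - mv) ⬝ᵥ Γ.mulVec (u + Uperp.mulVec ξp - mv)
        = Q (u - a) + Q (Uperp.mulVec ξp - bb) := by
      rw [hQdef]; exact h3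
    rw [hρ, h4]
    simp only [hfpdef, hEdef]
    rw [← Real.exp_add, ← Real.exp_add]
    congr 1
    ring
  have hfactUr : ∀ (ξr : Fin r → ℝ) (ξp : Fin (d - r) → ℝ),
      ρ (Ur.mulVec ξr + Uperp.mulVec ξp) =
      fr ξr * (fp ξp * E (Ur.mulVec ξr + Uperp.mulVec ξp)) := by
    intro ξr ξp
    simp only [hfrdef]
    exact hfact _ (hPUr ξr) ξp
  have hfactP : ∀ (x : Fin d → ℝ) (ξp : Fin (d - r) → ℝ),
      ρ (P.mulVec x + Uperp.mulVec ξp) =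
      Real.exp (-(1/2) * Q (P.mulVec x - a)) * (fp ξp * E (P.mulVec x + Uperp.mulVec ξp)) :=
    fun x ξp => hfact _ (hPP x) ξp
  -- integrability
  have hfrI : Integrable fr := by rw [hfrdef, hQdef]; exact aux_integrable_gauss Γ hΓ Ur hUrli a
  have hfpI : Integrable fp := by rw [hfpdef, hQdef]; exact aux_integrable_gauss Γ hΓ Uperp hUperpli bb
  obtain ⟨Ir, hIrdef⟩ : ∃ Ir : ℝ, Ir = ∫ ξr, fr ξr := ⟨_, rfl⟩
  obtain ⟨Ip, hIpdef⟩ : ∃ Ip : ℝ, Ip = ∫ ξp, fp ξp := ⟨_, rfl⟩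
  have hvolpos : ∀ n : ℕ, 0 < (volume : Measure (Fin n → ℝ)) Set.univ := by
    intro n
    exact isOpen_univ.measure_pos volume Set.univ_nonempty
  have hIrpos : 0 < Ir := by
    rw [hIrdef, MeasureTheory.integral_pos_iff_support_of_nonneg (fun ξr => (hfrpos ξr).le) hfrI]
    have : Function.support fr = Set.univ := Set.eq_univ_iff_forall.2 fun ξr => (hfrpos ξr).ne'
    rw [this]; exact hvolpos r
  have hIppos : 0 < Ip := by
    rw [hIpdef, MeasureTheory.integral_pos_iff_support_of_nonneg (fun ξp => (hfppos ξp).le) hfpI]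
    have : Function.support fp = Set.univ := Set.eq_univ_iff_forall.2 fun ξp => (hfppos ξp).ne'
    rw [this]; exact hvolpos (d - r)
  -- continuity / measurability
  have hEmeas : Measurable E := by rw [hEdef]; exact Real.measurable_exp.comp hΨmeas.neg
  have hcontUr : Continuous fun ξr : Fin r → ℝ => Ur.mulVec ξr := by
    have := LinearMap.continuous_of_finiteDimensional (Ur.mulVecLin)
    simpa [Matrix.coe_mulVecLin] using this
  have hcontUp : Continuous fun ξp : Fin (d - r) → ℝ => Uperp.mulVec ξp := by
    have := LinearMap.continuous_of_finiteDimensional (Uperp.mulVecLin)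
    simpa [Matrix.coe_mulVecLin] using this
  have hΓc : Continuous fun x : Fin d → ℝ => Γ.mulVec x := by
    have := LinearMap.continuous_of_finiteDimensional (Γ.mulVecLin)
    simpa [Matrix.coe_mulVecLin] using this
  have hdot : Continuous fun p : (Fin d → ℝ) × (Fin d → ℝ) => p.1 ⬝ᵥ p.2 := by
    show Continuous fun p : (Fin d → ℝ) × (Fin d → ℝ) => ∑ i, p.1 i * p.2 i
    exact continuous_finset_sum _ fun i _ =>
      ((continuous_apply i).comp continuous_fst).mul ((continuous_apply i).comp continuous_snd)
  have hQcont : Continuous Q := by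
    rw [hQdef]
    exact hdot.comp (continuous_id.prodMk hΓc)
  have hcontfr : Continuous fr := by
    rw [hfrdef]
    exact Real.continuous_exp.comp
      (continuous_const.mul (hQcont.comp (hcontUr.sub continuous_const)))
  have hcontfp : Continuous fp := by
    rw [hfpdef]
    exact Real.continuous_exp.comp
      (continuous_const.mul (hQcont.comp (hcontUp.sub continuous_const)))
  -- the two half-marginals
  obtain ⟨J, hJdef⟩ : ∃ J : (Fin (d - r) → ℝ) → ℝ, J = fun ξp => ∫ ξr, fr ξr * E (Ur.mulVec ξr + Uperp.mulVec ξp) := ⟨_, rfl⟩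
  obtain ⟨K, hKdef⟩ : ∃ K : (Fin d → ℝ) → ℝ, K = fun u => ∫ ξp, fp ξp * E (u + Uperp.mulVec ξp) := ⟨_, rfl⟩
  have hJint : ∀ ξp : Fin (d - r) → ℝ,
      Integrable (fun ξr => fr ξr * E (Ur.mulVec ξr + Uperp.mulVec ξp)) := by
    intro ξp
    apply Integrable.mono' (hfrI.mul_const (κ * E 0))
    · exact (hcontfr.measurable.mul
        (hEmeas.comp ((hcontUr.add continuous_const).measurable))).aestronglyMeasurable
    · refine Filter.Eventually.of_forall fun ξr => ?_
      rw [Real.norm_eq_abs, abs_of_pos (mul_pos (hfrpos _) (hEpos _))]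
      exact mul_le_mul_of_nonneg_left (hEκ _ 0) (hfrpos _).le
  have hKint : ∀ u : Fin d → ℝ,
      Integrable (fun ξp => fp ξp * E (u + Uperp.mulVec ξp)) := by
    intro u
    apply Integrable.mono' (hfpI.mul_const (κ * E 0))
    · exact (hcontfp.measurable.mul
        (hEmeas.comp ((continuous_const.add hcontUp).measurable))).aestronglyMeasurable
    · refine Filter.Eventually.of_forall fun ξp => ?_
      rw [Real.norm_eq_abs, abs_of_pos (mul_pos (hfppos _) (hEpos _))]
      exact mul_le_mul_of_nonneg_left (hEκ _ 0) (hfppos _).le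
  have hJpos : ∀ ξp, 0 < J ξp := by
    intro ξp
    simp only [hJdef]
    rw [MeasureTheory.integral_pos_iff_support_of_nonneg
      (fun ξr => (mul_pos (hfrpos ξr) (hEpos _)).le) (hJint ξp)]
    have : (Function.support fun ξr => fr ξr * E (Ur.mulVec ξr + Uperp.mulVec ξp))
        = Set.univ := Set.eq_univ_iff_forall.2 fun ξr => (mul_pos (hfrpos ξr) (hEpos _)).ne'
    rw [this]; exact hvolpos r
  have hKpos : ∀ u, 0 < K u := by
    intro u
    simp only [hKdef]
    rw [MeasureTheory.integral_pos_iff_support_of_nonneg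
      (fun ξp => (mul_pos (hfppos ξp) (hEpos _)).le) (hKint u)]
    have : (Function.support fun ξp => fp ξp * E (u + Uperp.mulVec ξp))
        = Set.univ := Set.eq_univ_iff_forall.2 fun ξp => (mul_pos (hfppos ξp) (hEpos _)).ne'
    rw [this]; exact hvolpos (d - r)
  -- pointwise sandwich bounds
  have hK_up : ∀ (u : Fin d → ℝ) (ξp : Fin (d - r) → ℝ),
      K u ≤ κ * (E (u + Uperp.mulVec ξp) * Ip) := by
    intro u ξp
    simp only [hKdef]
    calc (∫ ξp', fp ξp' * E (u + Uperp.mulVec ξp'))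
        ≤ ∫ ξp', fp ξp' * (κ * E (u + Uperp.mulVec ξp)) :=
          integral_mono (hKint u) (hfpI.mul_const _)
            (fun ξp' => mul_le_mul_of_nonneg_left (hEκ _ _) (hfppos ξp').le)
      _ = κ * (E (u + Uperp.mulVec ξp) * Ip) := by
          rw [MeasureTheory.integral_mul_const, hIpdef]; ring
  have hK_lo : ∀ (u : Fin d → ℝ) (ξp : Fin (d - r) → ℝ),
      E (u + Uperp.mulVec ξp) * Ip ≤ κ * K u := by
    intro u ξp
    have h0 : E (u + Uperp.mulVec ξp) * Ip = ∫ ξp', fp ξp' * E (u + Uperp.mulVec ξp) := by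
      rw [MeasureTheory.integral_mul_const, hIpdef]; ring
    rw [h0]
    calc (∫ ξp', fp ξp' * E (u + Uperp.mulVec ξp))
        ≤ ∫ ξp', κ * (fp ξp' * E (u + Uperp.mulVec ξp')) :=
          integral_mono (hfpI.mul_const _) ((hKint u).const_mul κ) (fun ξp' => by
            calc fp ξp' * E (u + Uperp.mulVec ξp)
                ≤ fp ξp' * (κ * E (u + Uperp.mulVec ξp')) :=
                  mul_le_mul_of_nonneg_left (hEκ _ _) (hfppos ξp').le
              _ = κ * (fp ξp' * E (u + Uperp.mulVec ξp')) := by ring)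
      _ = κ * K u := by rw [MeasureTheory.integral_const_mul]; simp only [hKdef]
  have hKbound : ∀ u, K u ≤ κ * E 0 * Ip := by
    intro u
    simp only [hKdef]
    calc (∫ ξp', fp ξp' * E (u + Uperp.mulVec ξp'))
        ≤ ∫ ξp', fp ξp' * (κ * E 0) :=
          integral_mono (hKint u) (hfpI.mul_const _)
            (fun ξp' => mul_le_mul_of_nonneg_left (hEκ _ 0) (hfppos ξp').le)
      _ = κ * E 0 * Ip := by rw [MeasureTheory.integral_mul_const, hIpdef]; ring
  have hJbound : ∀ ξp, J ξp ≤ κ * E 0 * Ir := by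
    intro ξp
    simp only [hJdef]
    calc (∫ ξr, fr ξr * E (Ur.mulVec ξr + Uperp.mulVec ξp))
        ≤ ∫ ξr, fr ξr * (κ * E 0) :=
          integral_mono (hJint ξp) (hfrI.mul_const _)
            (fun ξr => mul_le_mul_of_nonneg_left (hEκ _ 0) (hfrpos ξr).le)
      _ = κ * E 0 * Ir := by rw [MeasureTheory.integral_mul_const, hIrdef]; ring
  have hKmUr : StronglyMeasurable (fun ξr : Fin r → ℝ => K (Ur.mulVec ξr)) := by
    have hprod : StronglyMeasurable (fun z : (Fin r → ℝ) × (Fin (d - r) → ℝ) =>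
        fp z.2 * E (Ur.mulVec z.1 + Uperp.mulVec z.2)) :=
      ((hcontfp.measurable.comp measurable_snd).mul
        (hEmeas.comp ((hcontUr.comp continuous_fst).add
          (hcontUp.comp continuous_snd)).measurable)).stronglyMeasurable
    have h2 : StronglyMeasurable fun ξr : Fin r → ℝ =>
        ∫ ξp, fp ξp * E (Ur.mulVec ξr + Uperp.mulVec ξp) := hprod.integral_prod_right'
    simp only [hKdef]
    exact h2
  have hJm : StronglyMeasurable J := by
    have hprod : StronglyMeasurable (fun z : (Fin (d - r) → ℝ) × (Fin r → ℝ) =>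
        fr z.2 * E (Ur.mulVec z.2 + Uperp.mulVec z.1)) :=
      ((hcontfr.measurable.comp measurable_snd).mul
        (hEmeas.comp ((hcontUr.comp continuous_snd).add
          (hcontUp.comp continuous_fst)).measurable)).stronglyMeasurable
    have h2 : StronglyMeasurable fun ξp : Fin (d - r) → ℝ =>
        ∫ ξr, fr ξr * E (Ur.mulVec ξr + Uperp.mulVec ξp) := hprod.integral_prod_right'
    simp only [hJdef]
    exact h2
  have hfrKint : Integrable (fun ξr => fr ξr * K (Ur.mulVec ξr)) := by
    apply Integrable.mono' (hfrI.mul_const (κ * E 0 * Ip))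
    · exact (hcontfr.stronglyMeasurable.mul hKmUr).aestronglyMeasurable
    · refine Filter.Eventually.of_forall fun ξr => ?_
      rw [Real.norm_eq_abs, abs_of_pos (mul_pos (hfrpos _) (hKpos _))]
      exact mul_le_mul_of_nonneg_left (hKbound _) (hfrpos _).le
  have hInt_pp : ∀ ξp : Fin (d - r) → ℝ,
      (∫ ξr, ρ (Ur.mulVec ξr + Uperp.mulVec ξp)) = fp ξp * J ξp := by
    intro ξp
    simp only [hfactUr]
    rw [show (fun ξr => fr ξr * (fp ξp * E (Ur.mulVec ξr + Uperp.mulVec ξp)))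
        = fun ξr => fp ξp * (fr ξr * E (Ur.mulVec ξr + Uperp.mulVec ξp)) from
      funext fun _ => by ring, MeasureTheory.integral_const_mul]
    simp only [hJdef]
  have hInt_pr : ∀ ξr : Fin r → ℝ,
      (∫ ξp, ρ (Ur.mulVec ξr + Uperp.mulVec ξp)) = fr ξr * K (Ur.mulVec ξr) := by
    intro ξr
    simp only [hfactUr]
    rw [MeasureTheory.integral_const_mul]
    simp only [hKdef]
  have hD : ∀ x : Fin d → ℝ,
      (∫ ξp', ρ (P.mulVec x + Uperp.mulVec ξp')) =
        Real.exp (-(1/2) * Q (P.mulVec x - a)) * K (P.mulVec x) := by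
    intro x
    simp only [hfactP]
    rw [MeasureTheory.integral_const_mul]
    simp only [hKdef]
  have hC_eq : C = ∫ ξr, fr ξr * K (Ur.mulVec ξr) := by
    calc C = ∫ ξr, ∫ ξp, ρ (Ur.mulVec ξr + Uperp.mulVec ξp) := rfl
      _ = ∫ ξr, fr ξr * K (Ur.mulVec ξr) :=
          integral_congr_ae (Filter.Eventually.of_forall fun ξr => hInt_pr ξr)
  have hC_up : ∀ ξp : Fin (d - r) → ℝ, C ≤ κ * (Ip * J ξp) := by
    intro ξp
    rw [hC_eq]
    have hint2 : Integrable (fun ξr' =>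
        fr ξr' * (κ * (E (Ur.mulVec ξr' + Uperp.mulVec ξp) * Ip))) := by
      rw [show (fun ξr' => fr ξr' * (κ * (E (Ur.mulVec ξr' + Uperp.mulVec ξp) * Ip)))
          = fun ξr' => (κ * Ip) * (fr ξr' * E (Ur.mulVec ξr' + Uperp.mulVec ξp)) from
        funext fun _ => by ring]
      exact (hJint ξp).const_mul _
    calc (∫ ξr', fr ξr' * K (Ur.mulVec ξr'))
        ≤ ∫ ξr', fr ξr' * (κ * (E (Ur.mulVec ξr' + Uperp.mulVec ξp) * Ip)) :=
          integral_mono hfrKint hint2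
            (fun ξr' => mul_le_mul_of_nonneg_left (hK_up _ ξp) (hfrpos ξr').le)
      _ = κ * (Ip * J ξp) := by
          rw [show (fun ξr' => fr ξr' * (κ * (E (Ur.mulVec ξr' + Uperp.mulVec ξp) * Ip)))
              = fun ξr' => (κ * Ip) * (fr ξr' * E (Ur.mulVec ξr' + Uperp.mulVec ξp)) from
            funext fun _ => by ring, MeasureTheory.integral_const_mul]
          simp only [hJdef]; ring
  have hC_lo : ∀ ξp : Fin (d - r) → ℝ, Ip * J ξp ≤ κ * C := by
    intro ξp
    have hint1 : Integrable (fun ξr' =>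
        fr ξr' * (E (Ur.mulVec ξr' + Uperp.mulVec ξp) * Ip)) := by
      rw [show (fun ξr' => fr ξr' * (E (Ur.mulVec ξr' + Uperp.mulVec ξp) * Ip))
          = fun ξr' => (fr ξr' * E (Ur.mulVec ξr' + Uperp.mulVec ξp)) * Ip from
        funext fun _ => by ring]
      exact (hJint ξp).mul_const _
    have h0 : Ip * J ξp = ∫ ξr', fr ξr' * (E (Ur.mulVec ξr' + Uperp.mulVec ξp) * Ip) := by
      rw [show (fun ξr' => fr ξr' * (E (Ur.mulVec ξr' + Uperp.mulVec ξp) * Ip))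
          = fun ξr' => (fr ξr' * E (Ur.mulVec ξr' + Uperp.mulVec ξp)) * Ip from
        funext fun _ => by ring, MeasureTheory.integral_mul_const]
      simp only [hJdef]; ring
    rw [h0, hC_eq]
    calc (∫ ξr', fr ξr' * (E (Ur.mulVec ξr' + Uperp.mulVec ξp) * Ip))
        ≤ ∫ ξr', κ * (fr ξr' * K (Ur.mulVec ξr')) :=
          integral_mono hint1 (hfrKint.const_mul κ) (fun ξr' => by
            calc fr ξr' * (E (Ur.mulVec ξr' + Uperp.mulVec ξp) * Ip)
                ≤ fr ξr' * (κ * K (Ur.mulVec ξr')) :=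
                  mul_le_mul_of_nonneg_left (hK_lo _ ξp) (hfrpos ξr').le
              _ = κ * (fr ξr' * K (Ur.mulVec ξr')) := by ring)
      _ = κ * ∫ ξr', fr ξr' * K (Ur.mulVec ξr') := MeasureTheory.integral_const_mul _ _
  have hCpos : 0 < C := by
    have h1 := hC_lo 0
    nlinarith [mul_pos hIppos (hJpos 0)]
  have hCne : C ≠ 0 := hCpos.ne'
  -- key sandwich
  have key1 : ∀ (u : Fin d → ℝ) (ξp : Fin (d - r) → ℝ),
      K u * J ξp ≤ κ ^ 2 * (E (u + Uperp.mulVec ξp) * C) := by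
    intro u ξp
    calc K u * J ξp ≤ (κ * (E (u + Uperp.mulVec ξp) * Ip)) * J ξp :=
          mul_le_mul_of_nonneg_right (hK_up u ξp) (hJpos ξp).le
      _ = (κ * E (u + Uperp.mulVec ξp)) * (Ip * J ξp) := by ring
      _ ≤ (κ * E (u + Uperp.mulVec ξp)) * (κ * C) :=
          mul_le_mul_of_nonneg_left (hC_lo ξp) (mul_nonneg hκpos.le (hEpos _).le)
      _ = κ ^ 2 * (E (u + Uperp.mulVec ξp) * C) := by ring
  have key2 : ∀ (u : Fin d → ℝ) (ξp : Fin (d - r) → ℝ),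
      E (u + Uperp.mulVec ξp) * C ≤ κ ^ 2 * (K u * J ξp) := by
    intro u ξp
    calc E (u + Uperp.mulVec ξp) * C ≤ E (u + Uperp.mulVec ξp) * (κ * (Ip * J ξp)) :=
          mul_le_mul_of_nonneg_left (hC_up ξp) (hEpos _).le
      _ = (E (u + Uperp.mulVec ξp) * Ip) * (κ * J ξp) := by ring
      _ ≤ (κ * K u) * (κ * J ξp) :=
          mul_le_mul_of_nonneg_right (hK_lo u ξp) (mul_nonneg hκpos.le (hJpos ξp).le)
      _ = κ ^ 2 * (K u * J ξp) := by ring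
  -- the central scalar inequalities
  have hstep_lo : ∀ (u : Fin d → ℝ) (ξp : Fin (d - r) → ℝ),
      κ⁻¹ ^ 2 * C⁻¹ * (K u * J ξp) ≤ E (u + Uperp.mulVec ξp) := by
    intro u ξp
    have h2 : κ⁻¹ ^ 2 * C⁻¹ * (κ ^ 2 * (E (u + Uperp.mulVec ξp) * C))
        = E (u + Uperp.mulVec ξp) := by field_simp
    calc κ⁻¹ ^ 2 * C⁻¹ * (K u * J ξp)
        ≤ κ⁻¹ ^ 2 * C⁻¹ * (κ ^ 2 * (E (u + Uperp.mulVec ξp) * C)) :=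
          mul_le_mul_of_nonneg_left (key1 u ξp) (by positivity)
      _ = E (u + Uperp.mulVec ξp) := h2
  have hstep_up : ∀ (u : Fin d → ℝ) (ξp : Fin (d - r) → ℝ),
      E (u + Uperp.mulVec ξp) ≤ κ ^ 2 * C⁻¹ * (K u * J ξp) := by
    intro u ξp
    have h0 : E (u + Uperp.mulVec ξp) = E (u + Uperp.mulVec ξp) * C * C⁻¹ := by
      field_simp
    rw [h0]
    calc E (u + Uperp.mulVec ξp) * C * C⁻¹ ≤ (κ ^ 2 * (K u * J ξp)) * C⁻¹ :=
          mul_le_mul_of_nonneg_right (key2 u ξp) (by positivity)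
      _ = κ ^ 2 * C⁻¹ * (K u * J ξp) := by ring
  -- marginal identities (moved)
  have hpp_eq : ∀ ξp, pperp ξp = C⁻¹ * (fp ξp * J ξp) := by
    intro ξp; simp only [pperp, hInt_pp]
  have hpc_eq : ∀ (x : Fin d → ℝ) ξp, pcond x ξp
      = fp ξp * E (P.mulVec x + Uperp.mulVec ξp) / K (P.mulVec x) := by
    intro x ξp
    simp only [pcond]
    rw [hD, hfactP, mul_div_mul_left _ _ (Real.exp_pos _).ne']
  -- part (ii)
  have main2 : ∀ (x : Fin d → ℝ) (ξp : Fin (d - r) → ℝ),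
      κ⁻¹ ^ 2 * pperp ξp ≤ pcond x ξp ∧ pcond x ξp ≤ κ ^ 2 * pperp ξp := by
    intro x ξp
    rw [hpc_eq, hpp_eq]
    constructor
    · rw [le_div_iff₀ (hKpos _)]
      have h1 := hstep_lo (P.mulVec x) ξp
      calc κ⁻¹ ^ 2 * (C⁻¹ * (fp ξp * J ξp)) * K (P.mulVec x)
          = fp ξp * (κ⁻¹ ^ 2 * C⁻¹ * (K (P.mulVec x) * J ξp)) := by ring
        _ ≤ fp ξp * E (P.mulVec x + Uperp.mulVec ξp) :=
            mul_le_mul_of_nonneg_left h1 (hfppos ξp).le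
    · rw [div_le_iff₀ (hKpos _)]
      have h1 := hstep_up (P.mulVec x) ξp
      calc fp ξp * E (P.mulVec x + Uperp.mulVec ξp)
          ≤ fp ξp * (κ ^ 2 * C⁻¹ * (K (P.mulVec x) * J ξp)) :=
            mul_le_mul_of_nonneg_left h1 (hfppos ξp).le
        _ = κ ^ 2 * (C⁻¹ * (fp ξp * J ξp)) * K (P.mulVec x) := by ring
  refine ⟨?_, main2, ?_⟩
  · -- part (i)
    intro ξr ξp
    have hprK : pr ξr = C⁻¹ * (fr ξr * K (Ur.mulVec ξr)) := by
      simp only [pr, hInt_pr]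
    have hppJ : pperp ξp = C⁻¹ * (fp ξp * J ξp) := hpp_eq ξp
    rw [hprK, hppJ, hfactUr]
    constructor
    · have h1 := hstep_lo (Ur.mulVec ξr) ξp
      calc κ⁻¹ ^ 2 * (C⁻¹ * (fr ξr * K (Ur.mulVec ξr)) * (C⁻¹ * (fp ξp * J ξp)))
          = (fr ξr * fp ξp * C⁻¹) * (κ⁻¹ ^ 2 * C⁻¹ * (K (Ur.mulVec ξr) * J ξp)) := by ring
        _ ≤ (fr ξr * fp ξp * C⁻¹) * E (Ur.mulVec ξr + Uperp.mulVec ξp) :=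
            mul_le_mul_of_nonneg_left h1
              (mul_nonneg (mul_nonneg (hfrpos ξr).le (hfppos ξp).le) (inv_nonneg.2 hCpos.le))
        _ = C⁻¹ * (fr ξr * (fp ξp * E (Ur.mulVec ξr + Uperp.mulVec ξp))) := by ring
    · have h1 := hstep_up (Ur.mulVec ξr) ξp
      calc C⁻¹ * (fr ξr * (fp ξp * E (Ur.mulVec ξr + Uperp.mulVec ξp)))
          = (fr ξr * fp ξp * C⁻¹) * E (Ur.mulVec ξr + Uperp.mulVec ξp) := by ring
        _ ≤ (fr ξr * fp ξp * C⁻¹) * (κ ^ 2 * C⁻¹ * (K (Ur.mulVec ξr) * J ξp)) :=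
            mul_le_mul_of_nonneg_left h1
              (mul_nonneg (mul_nonneg (hfrpos ξr).le (hfppos ξp).le) (inv_nonneg.2 hCpos.le))
        _ = κ ^ 2 * (C⁻¹ * (fr ξr * K (Ur.mulVec ξr)) * (C⁻¹ * (fp ξp * J ξp))) := by ring
  · -- part (iii)
    intro x
    have hpc : ∀ ξp, pcond x ξp
        = fp ξp * E (P.mulVec x + Uperp.mulVec ξp) / K (P.mulVec x) := hpc_eq x
    have hKx := hKpos (P.mulVec x)
    have hbd := main2 x
    have hpcm : Measurable (fun ξp => pcond x ξp) := by
      rw [show (fun ξp => pcond x ξp)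
          = fun ξp => fp ξp * E (P.mulVec x + Uperp.mulVec ξp) / K (P.mulVec x) from
        funext hpc]
      exact (hcontfp.measurable.mul
        (hEmeas.comp ((continuous_const.add hcontUp).measurable))).div_const _
    have hppm : Measurable pperp := by
      rw [show pperp = fun ξp => C⁻¹ * (fp ξp * J ξp) from funext hpp_eq]
      exact measurable_const.mul (hcontfp.measurable.mul hJm.measurable)
    have hpp_pos : ∀ ξp, 0 < pperp ξp := fun ξp => by
      rw [hpp_eq]
      exact mul_pos (inv_pos.2 hCpos) (mul_pos (hfppos ξp) (hJpos ξp))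
    have hpc_pos : ∀ ξp, 0 < pcond x ξp := fun ξp => by
      rw [hpc ξp]
      exact div_pos (mul_pos (hfppos ξp) (hEpos _)) hKx
    have hppI : Integrable pperp := by
      rw [show pperp = fun ξp => C⁻¹ * (fp ξp * J ξp) from funext hpp_eq]
      apply Integrable.mono' ((hfpI.mul_const (κ * E 0 * Ir)).const_mul C⁻¹)
      · exact (measurable_const.mul
          (hcontfp.measurable.mul hJm.measurable)).aestronglyMeasurable
      · refine Filter.Eventually.of_forall fun ξp => ?_
        rw [Real.norm_eq_abs, abs_of_pos
          (mul_pos (inv_pos.2 hCpos) (mul_pos (hfppos ξp) (hJpos ξp)))]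
        have h1 : fp ξp * J ξp ≤ fp ξp * (κ * E 0 * Ir) :=
          mul_le_mul_of_nonneg_left (hJbound ξp) (hfppos ξp).le
        calc C⁻¹ * (fp ξp * J ξp) ≤ C⁻¹ * (fp ξp * (κ * E 0 * Ir)) :=
              mul_le_mul_of_nonneg_left h1 (inv_nonneg.2 hCpos.le)
          _ = C⁻¹ * (fp ξp * (κ * E 0 * Ir)) := rfl
    have hpcI : Integrable (fun ξp => pcond x ξp) := by
      rw [show (fun ξp => pcond x ξp)
          = fun ξp => fp ξp * E (P.mulVec x + Uperp.mulVec ξp) / K (P.mulVec x) from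
        funext hpc]
      exact (hKint (P.mulVec x)).div_const _
    have hIpc : ∫ ξp, pcond x ξp = 1 := by
      rw [show (fun ξp => pcond x ξp)
          = fun ξp => fp ξp * E (P.mulVec x + Uperp.mulVec ξp) / K (P.mulVec x) from
        funext hpc]
      rw [MeasureTheory.integral_div]
      rw [show (∫ ξp, fp ξp * E (P.mulVec x + Uperp.mulVec ξp)) = K (P.mulVec x) from by
        simp only [hKdef]]
      exact div_self hKx.ne'
    -- Fubini: total mass of pperp is 1
    have hFint : Integrable (Function.uncurry fun ξr ξp =>
        fr ξr * (fp ξp * E (Ur.mulVec ξr + Uperp.mulVec ξp)))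
        ((volume : Measure (Fin r → ℝ)).prod (volume : Measure (Fin (d - r) → ℝ))) := by
      apply Integrable.mono' (g := fun z => (κ * E 0) * (fr z.1 * fp z.2))
        ((hfrI.mul_prod hfpI).const_mul (κ * E 0))
      · exact ((hcontfr.comp continuous_fst).measurable.mul
          ((hcontfp.comp continuous_snd).measurable.mul
            (hEmeas.comp ((hcontUr.comp continuous_fst).add
              (hcontUp.comp continuous_snd)).measurable))).aestronglyMeasurable
      · refine Filter.Eventually.of_forall fun z => ?_
        show ‖fr z.1 * (fp z.2 * E (Ur.mulVec z.1 + Uperp.mulVec z.2))‖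
          ≤ (κ * E 0) * (fr z.1 * fp z.2)
        rw [Real.norm_eq_abs, abs_of_pos
          (mul_pos (hfrpos _) (mul_pos (hfppos _) (hEpos _)))]
        calc fr z.1 * (fp z.2 * E (Ur.mulVec z.1 + Uperp.mulVec z.2))
            ≤ fr z.1 * (fp z.2 * (κ * E 0)) :=
              mul_le_mul_of_nonneg_left
                (mul_le_mul_of_nonneg_left (hEκ _ 0) (hfppos _).le) (hfrpos _).le
          _ = (κ * E 0) * (fr z.1 * fp z.2) := by ring
    have hC_alt : C = ∫ ξp, fp ξp * J ξp := by
      calc C = ∫ ξr, ∫ ξp, ρ (Ur.mulVec ξr + Uperp.mulVec ξp) := rfl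
        _ = ∫ ξr, ∫ ξp, fr ξr * (fp ξp * E (Ur.mulVec ξr + Uperp.mulVec ξp)) := by
            simp only [hfactUr]
        _ = ∫ ξp, ∫ ξr, fr ξr * (fp ξp * E (Ur.mulVec ξr + Uperp.mulVec ξp)) :=
            MeasureTheory.integral_integral_swap hFint
        _ = ∫ ξp, fp ξp * J ξp := by
            refine integral_congr_ae (Filter.Eventually.of_forall fun ξp => ?_)
            show (∫ ξr, fr ξr * (fp ξp * E (Ur.mulVec ξr + Uperp.mulVec ξp)))
              = fp ξp * J ξp
            rw [show (fun ξr => fr ξr * (fp ξp * E (Ur.mulVec ξr + Uperp.mulVec ξp)))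
                = fun ξr => fp ξp * (fr ξr * E (Ur.mulVec ξr + Uperp.mulVec ξp)) from
              funext fun _ => by ring, MeasureTheory.integral_const_mul]
            simp only [hJdef]
    have hIpp1 : ∫ ξp, pperp ξp = 1 := by
      rw [show pperp = fun ξp => C⁻¹ * (fp ξp * J ξp) from funext hpp_eq,
        MeasureTheory.integral_const_mul, ← hC_alt]
      exact inv_mul_cancel₀ hCne
    -- rewrite the lintegral as the ofReal of a real integral
    have hstep : ∀ ξp, ENNReal.ofReal ((pcond x ξp - pperp ξp) ^ 2)
        / ENNReal.ofReal (pperp ξp)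
        = ENNReal.ofReal ((pcond x ξp - pperp ξp) ^ 2 / pperp ξp) :=
      fun ξp => (ENNReal.ofReal_div_of_pos (hpp_pos ξp)).symm
    rw [lintegral_congr hstep]
    have hhnn : ∀ ξp, 0 ≤ (pcond x ξp - pperp ξp) ^ 2 / pperp ξp :=
      fun ξp => div_nonneg (sq_nonneg _) (hpp_pos ξp).le
    have hq_le : ∀ ξp, (pcond x ξp) ^ 2 / pperp ξp ≤ κ ^ 2 * pcond x ξp := by
      intro ξp
      rw [div_le_iff₀ (hpp_pos ξp)]
      have h1 := (hbd ξp).2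
      have h0 := (hpc_pos ξp).le
      nlinarith
    have hhI : Integrable (fun ξp => (pcond x ξp - pperp ξp) ^ 2 / pperp ξp) := by
      apply Integrable.mono' (hppI.const_mul ((κ ^ 2 - 1) ^ 2))
      · exact (((hpcm.sub hppm).pow_const 2).div hppm).aestronglyMeasurable
      · refine Filter.Eventually.of_forall fun ξp => ?_
        rw [Real.norm_eq_abs, abs_of_nonneg (hhnn ξp)]
        have hpp := hpp_pos ξp
        have h1 : pcond x ξp - pperp ξp ≤ (κ ^ 2 - 1) * pperp ξp := by
          have := (hbd ξp).2; nlinarith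
        have h2 : -((κ ^ 2 - 1) * pperp ξp) ≤ pcond x ξp - pperp ξp := by
          have hlo := (hbd ξp).1
          have hk : (2 : ℝ) - κ ^ 2 ≤ κ⁻¹ ^ 2 := by
            have h3 : κ * κ⁻¹ = 1 := mul_inv_cancel₀ hκne
            nlinarith [sq_nonneg (κ - κ⁻¹)]
          nlinarith
        have hsq : (pcond x ξp - pperp ξp) ^ 2 ≤ ((κ ^ 2 - 1) * pperp ξp) ^ 2 :=
          sq_le_sq' h2 h1
        rw [div_le_iff₀ hpp]
        calc (pcond x ξp - pperp ξp) ^ 2 ≤ ((κ ^ 2 - 1) * pperp ξp) ^ 2 := hsq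
          _ = (κ ^ 2 - 1) ^ 2 * pperp ξp * pperp ξp := by ring
    rw [← MeasureTheory.ofReal_integral_eq_lintegral_ofReal hhI
      (Filter.Eventually.of_forall hhnn)]
    apply ENNReal.ofReal_le_ofReal
    have hqI : Integrable (fun ξp => (pcond x ξp) ^ 2 / pperp ξp) := by
      apply Integrable.mono' (hpcI.const_mul (κ ^ 2))
      · exact ((hpcm.pow_const 2).div hppm).aestronglyMeasurable
      · refine Filter.Eventually.of_forall fun ξp => ?_
        rw [Real.norm_eq_abs, abs_of_nonneg (div_nonneg (sq_nonneg _) (hpp_pos ξp).le)]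
        exact hq_le ξp
    have hpt : ∀ ξp, (pcond x ξp - pperp ξp) ^ 2 / pperp ξp
        = ((pcond x ξp) ^ 2 / pperp ξp - 2 * pcond x ξp) + pperp ξp := by
      intro ξp
      have hne := (hpp_pos ξp).ne'
      field_simp
      ring
    rw [show (fun ξp => (pcond x ξp - pperp ξp) ^ 2 / pperp ξp)
        = fun ξp => ((pcond x ξp) ^ 2 / pperp ξp - 2 * pcond x ξp) + pperp ξp from
      funext hpt]
    have hsubI : Integrable (fun ξp => (pcond x ξp) ^ 2 / pperp ξp - 2 * pcond x ξp) :=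
      hqI.sub (hpcI.const_mul 2)
    rw [MeasureTheory.integral_add hsubI hppI,
      MeasureTheory.integral_sub hqI ((hpcI.const_mul 2)),
      MeasureTheory.integral_const_mul, hIpc, hIpp1]
    have hfin : ∫ ξp, (pcond x ξp) ^ 2 / pperp ξp ≤ κ ^ 2 := by
      calc (∫ ξp, (pcond x ξp) ^ 2 / pperp ξp) ≤ ∫ ξp, κ ^ 2 * pcond x ξp :=
            integral_mono hqI (hpcI.const_mul _) hq_le
        _ = κ ^ 2 := by rw [MeasureTheory.integral_const_mul, hIpc, mul_one]
    linarith
end
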